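/- arXiv:1707.01597 — 6 statements merged into one kernel-verified Lean document; each statement's English description precedes it below -/
import Mathlib

section
/- Let p, q ≥ 0 and, for 0 < |κ| ≤ κ₁, set z_κ = λ_κ^∞ − iκ² Im F(λ_κ^∞,κ). Then there exist C > 0 and κ₂ ∈ (0,κ₁] such that for all 0 < |κ| ≤ κ₂: ∫_{a₀}^{b₀} |λ − Re z_κ|^p / |λ − z_κ|^q dλ ≤ Cκ^{2(p−q+1)} if p−q+1 < 0; ≤ C·|log|κ|| if p−q+1 = 0; and ≤ C if p−q+1 > 0. -/
open MeasureTheory Filter Set Topology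


theorem aux_split (D ε s : ℝ) (hε : 0 < ε) (hεD : ε ≤ D) :
    ∫ t in (0:ℝ)..D, (max |t| ε)^s = ε^(s+1) + ∫ t in ε..D, t^s := by
  have hc : Continuous fun t : ℝ => (max |t| ε) ^ s := by
    apply Continuous.rpow_const (continuous_abs.max continuous_const)
    intro t; left; exact ne_of_gt (lt_max_of_lt_right hε)
  rw [← intervalIntegral.integral_add_adjacent_intervals (b := ε)
    (hc.intervalIntegrable _ _) (hc.intervalIntegrable _ _)]
  congr 1
  · have h1 : ∫ t in (0:ℝ)..ε, (max |t| ε)^s = ∫ t in (0:ℝ)..ε, ε^s := by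
      apply intervalIntegral.integral_congr
      intro t ht
      rw [Set.uIcc_of_le hε.le] at ht
      show (max |t| ε) ^ s = ε ^ s
      rw [max_eq_right (by rw [abs_of_nonneg ht.1]; exact ht.2)]
    rw [h1, intervalIntegral.integral_const, smul_eq_mul, sub_zero]
    nth_rewrite 1 [← Real.rpow_one ε]
    rw [← Real.rpow_add hε]; ring_nf
  · apply intervalIntegral.integral_congr
    intro t ht
    rw [Set.uIcc_of_le hεD] at ht
    show (max |t| ε) ^ s = t ^ s
    rw [abs_of_nonneg (hε.le.trans ht.1), max_eq_left ht.1]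

theorem aux_reduce (a₀ b₀ r ε s : ℝ) (hε : 0 < ε) (hr1 : a₀ ≤ r) (hr2 : r ≤ b₀) :
    ∫ l in a₀..b₀, (max |l - r| ε)^s ≤ 2 * ∫ t in (0:ℝ)..(b₀ - a₀), (max |t| ε)^s := by
  set D := b₀ - a₀ with hD
  have hc : Continuous fun t : ℝ => (max |t| ε) ^ s := by
    apply Continuous.rpow_const (continuous_abs.max continuous_const)
    intro t; left; exact ne_of_gt (lt_max_of_lt_right hε)
  have hc' : Continuous fun l : ℝ => (max |l - r| ε) ^ s :=
    hc.comp (continuous_id.sub continuous_const)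
  have hnn : ∀ t : ℝ, 0 ≤ (max |t| ε)^s := fun t =>
    Real.rpow_nonneg (le_trans hε.le (le_max_right _ _)) s
  have step1 : (∫ l in a₀..b₀, (max |l - r| ε)^s) ≤ ∫ l in (r - D)..(r + D), (max |l - r| ε)^s := by
    apply intervalIntegral.integral_mono_interval (by linarith) (by linarith) (by linarith)
    · exact Filter.Eventually.of_forall fun l => hnn _
    · exact hc'.intervalIntegrable _ _
  have step2 : (∫ l in (r - D)..(r + D), (max |l - r| ε)^s) = ∫ t in (-D)..D, (max |t| ε)^s := by
    rw [intervalIntegral.integral_comp_sub_right (fun t => (max |t| ε)^s) r]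
    ring_nf
  have step3 : (∫ t in (-D)..D, (max |t| ε)^s) = 2 * ∫ t in (0:ℝ)..D, (max |t| ε)^s := by
    rw [← intervalIntegral.integral_add_adjacent_intervals (a := -D) (b := 0) (c := D)
      (hc.intervalIntegrable _ _) (hc.intervalIntegrable _ _)]
    have : (∫ t in (-D)..(0:ℝ), (max |t| ε)^s) = ∫ t in (0:ℝ)..D, (max |t| ε)^s := by
      rw [show (∫ t in (0:ℝ)..D, (max |t| ε)^s) = ∫ t in (0:ℝ)..D, (max |(-t)| ε)^s by
        simp [abs_neg]]
      rw [intervalIntegral.integral_comp_neg (fun t => (max |t| ε)^s)]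
      simp
    rw [this]; ring
  calc _ ≤ _ := step1
    _ = _ := step2
    _ = _ := step3

theorem aux_case1 (D ε s : ℝ) (hε : 0 < ε) (hεD : ε ≤ D) (hs : s + 1 < 0) :
    ε^(s+1) + (∫ t in ε..D, t^s) ≤ (1 + 1/(-(s+1))) * ε^(s+1) := by
  rw [integral_rpow (Or.inr ⟨by linarith, by rw [Set.uIcc_of_le hεD]; exact fun h => absurd h.1 (by linarith)⟩)]
  have hεp : (0:ℝ) < ε^(s+1) := Real.rpow_pos_of_pos hε _
  have hDp : (0:ℝ) < D^(s+1) := Real.rpow_pos_of_pos (hε.trans_le hεD) _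
  have e : (D^(s+1)-ε^(s+1))/(s+1) = (ε^(s+1)-D^(s+1))/(-(s+1)) := by
    rw [div_neg, ← neg_div, neg_sub]
  rw [e]
  have key : (ε^(s+1)-D^(s+1))/(-(s+1)) ≤ ε^(s+1)/(-(s+1)) :=
    (div_le_div_iff_of_pos_right (by linarith)).mpr (by linarith)
  have e2 : (1+1/(-(s+1)))*ε^(s+1) = ε^(s+1) + ε^(s+1)/(-(s+1)) := by ring
  linarith

theorem aux_case2 (D ε : ℝ) (hε : 0 < ε) (hεD : ε ≤ D) :
    ε^((-1:ℝ)+1) + (∫ t in ε..D, t^(-1:ℝ)) ≤ 1 + Real.log D - Real.log ε := by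
  have h0 : (0:ℝ) ∉ Set.uIcc ε D := by
    rw [Set.uIcc_of_le hεD]; exact fun h => absurd h.1 (by linarith)
  have : (∫ t in ε..D, t^(-1:ℝ)) = ∫ t in ε..D, t⁻¹ := by
    apply intervalIntegral.integral_congr
    intro t ht
    exact Real.rpow_neg_one t
  rw [this, integral_inv h0, neg_add_cancel, Real.rpow_zero,
    Real.log_div (by linarith) (by linarith)]
  linarith

theorem aux_case3 (D ε s : ℝ) (hε : 0 < ε) (hεD : ε ≤ D) (hs : 0 < s + 1) :
    ε^(s+1) + (∫ t in ε..D, t^s) ≤ (1 + 1/(s+1)) * D^(s+1) := by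
  rw [integral_rpow (Or.inl (by linarith))]
  have hεp : (0:ℝ) < ε^(s+1) := Real.rpow_pos_of_pos hε _
  have hDp : (0:ℝ) < D^(s+1) := Real.rpow_pos_of_pos (hε.trans_le hεD) _
  have hle : ε^(s+1) ≤ D^(s+1) := Real.rpow_le_rpow hε.le hεD hs.le
  have key : (D^(s+1)-ε^(s+1))/(s+1) ≤ D^(s+1)/(s+1) :=
    (div_le_div_iff_of_pos_right hs).mpr (by linarith)
  have e2 : (1+1/(s+1))*D^(s+1) = D^(s+1) + D^(s+1)/(s+1) := by ring
  linarith

theorem aux_ptwise (p q : ℝ) (hp : 0 ≤ p) (hq : 0 ≤ q) (l : ℝ) (z : ℂ) (ε : ℝ)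
    (hε : 0 < ε) (him : ε ≤ |z.im|) :
    |l - z.re|^p / ‖(l:ℂ) - z‖^q ≤ (max |l - z.re| ε)^(p-q) := by
  set w : ℂ := (l:ℂ) - z with hw
  have hwre : w.re = l - z.re := by simp [hw]
  have hwim : |w.im| = |z.im| := by simp [hw]
  have h1 : |l - z.re| ≤ ‖w‖ := by
    rw [← hwre]; exact Complex.abs_re_le_norm w
  have h2 : ε ≤ ‖w‖ := him.trans (by rw [← hwim]; exact Complex.abs_im_le_norm w)
  have hmax : max |l - z.re| ε ≤ ‖w‖ := max_le h1 h2
  have hmaxpos : 0 < max |l - z.re| ε := lt_max_of_lt_right hε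
  have hnum : |l - z.re|^p ≤ (max |l - z.re| ε)^p :=
    Real.rpow_le_rpow (abs_nonneg _) (le_max_left _ _) hp
  have hden : (max |l - z.re| ε)^q ≤ ‖w‖^q :=
    Real.rpow_le_rpow hmaxpos.le hmax hq
  have hdpos : (0:ℝ) < (max |l - z.re| ε)^q := Real.rpow_pos_of_pos hmaxpos _
  calc |l - z.re|^p / ‖w‖^q ≤ (max |l - z.re| ε)^p / (max |l - z.re| ε)^q := by
        apply div_le_div₀ (Real.rpow_nonneg hmaxpos.le _) hnum hdpos hden
    _ = (max |l - z.re| ε)^(p-q) := (Real.rpow_sub hmaxpos p q).symm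

theorem aux_integral_bound (a₀ b₀ p q ε : ℝ) (hab : a₀ ≤ b₀) (hp : 0 ≤ p) (hq : 0 ≤ q)
    (z : ℂ) (hz1 : a₀ ≤ z.re) (hz2 : z.re ≤ b₀) (hε : 0 < ε) (him : ε ≤ |z.im|)
    (hεD : ε ≤ b₀ - a₀) :
    (∫ l in a₀..b₀, |l - z.re|^p / ‖(l:ℂ) - z‖^q)
      ≤ 2 * (ε^(p-q+1) + ∫ t in ε..(b₀-a₀), t^(p-q)) := by
  have hzne : ∀ l : ℝ, ((l:ℂ) - z) ≠ 0 := by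
    intro l h
    have : ((l:ℂ) - z).im = 0 := by rw [h]; simp
    simp only [Complex.sub_im, Complex.ofReal_im, zero_sub, neg_eq_zero] at this
    rw [this] at him; simp at him; linarith
  have hcont : Continuous fun l : ℝ => |l - z.re|^p / ‖(l:ℂ) - z‖^q := by
    apply Continuous.div
    · exact ((continuous_id.sub continuous_const).abs).rpow_const (fun l => Or.inr hp)
    · apply Continuous.rpow_const
      · exact ((Complex.continuous_ofReal.sub continuous_const)).norm
      · intro l; left; exact norm_ne_zero_iff.mpr (hzne l)
    · intro l
      exact ne_of_gt (Real.rpow_pos_of_pos (norm_pos_iff.mpr (hzne l)) q)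
  have hcont2 : Continuous fun l : ℝ => (max |l - z.re| ε) ^ (p-q) := by
    apply Continuous.rpow_const ((continuous_id.sub continuous_const).abs.max continuous_const)
    intro t; left; exact ne_of_gt (lt_max_of_lt_right hε)
  have step0 : (∫ l in a₀..b₀, |l - z.re|^p / ‖(l:ℂ) - z‖^q)
      ≤ ∫ l in a₀..b₀, (max |l - z.re| ε)^(p-q) := by
    apply intervalIntegral.integral_mono_on hab
      (hcont.intervalIntegrable _ _) (hcont2.intervalIntegrable _ _)
    intro l _
    exact aux_ptwise p q hp hq l z ε hε him
  calc _ ≤ _ := step0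
    _ ≤ 2 * ∫ t in (0:ℝ)..(b₀-a₀), (max |t| ε)^(p-q) := aux_reduce a₀ b₀ z.re ε (p-q) hε hz1 hz2
    _ = 2 * (ε^(p-q+1) + ∫ t in ε..(b₀-a₀), t^(p-q)) := by
        rw [aux_split (b₀-a₀) ε (p-q) hε hεD]

theorem aux_log_combine (X L : ℝ) (hL : 1 ≤ L) : X + 4*L ≤ (|X| + 4)*L := by
  nlinarith [le_abs_self X, abs_nonneg X]

set_option maxHeartbeats 4000000 in
/-- Lemma 2.6 ("cases"): integral estimates near the point z_κ. -/
theorem stmt_5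
    (a a₀ b₀ b l₀ κ₀ α : ℝ)
    (ha : a < a₀) (hab : a₀ < b₀) (hb : b₀ < b)
    (hl₀ : l₀ ∈ Ioo a₀ b₀) (hκ₀ : 0 < κ₀) (hα : α ∈ Ioc (0:ℝ) 1)
    (lam : ℝ → ℝ) (F F' : ℝ → ℝ → ℂ)
    -- (H0)(a)
    (hH0a : Tendsto lam (𝓝 0) (𝓝 l₀))
    -- (H0)(b)
    (hH0b : ∃ M : ℝ, ∀ l ∈ Icc a b, ∀ k ∈ Icc (-κ₀) κ₀, ‖F l k‖ ≤ M)
    (hH0c : ContinuousWithinAt (fun p : ℝ × ℝ => F p.1 p.2)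
      (Icc a b ×ˢ Icc (-κ₀) κ₀) (l₀, 0))
    -- (H1): F(·,κ) is C¹ on [a,b] with derivative F'
    (hH1 : ∀ k ∈ Icc (-κ₀) κ₀, ∀ l ∈ Icc a b,
      HasDerivWithinAt (fun x => F x k) (F' l k) (Icc a b) l)
    (hH1cont : ∀ k ∈ Icc (-κ₀) κ₀, ContinuousOn (fun l => F' l k) (Icc a b))
    -- (H1)(a): F' bounded
    (hH1a : ∃ M' : ℝ, ∀ l ∈ Icc a b, ∀ k ∈ Icc (-κ₀) κ₀, ‖F' l k‖ ≤ M')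
    -- (H1)(b): F' is α-Hölder on [a₀,b₀] uniformly in κ
    (hH1b : ∃ L : ℝ, ∀ k ∈ Icc (-κ₀) κ₀, ∀ l₁ ∈ Icc a₀ b₀, ∀ l₂ ∈ Icc a₀ b₀,
      ‖F' l₁ k - F' l₂ k‖ ≤ L * |l₁ - l₂| ^ α)
    -- (H2): inf of Im F on [a₀,b₀] is positive
    (hH2 : ∀ k ∈ Icc (-κ₀) κ₀, ∃ c > 0, ∀ l ∈ Icc a₀ b₀, c ≤ (F l k).im)
    -- choice of δ₁ and κ₁
    (δ₁ κ₁ : ℝ)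
    (hδ₁ : 0 < δ₁) (hδ₁' : δ₁ < min (l₀ - a₀) (min (b₀ - l₀) 1))
    (hκ₁ : 0 < κ₁) (hκ₁' : κ₁ ≤ κ₀)
    (hmap : ∀ k : ℝ, |k| ≤ κ₁ → ∀ l ∈ Icc a₀ b₀,
      lam k - k ^ 2 * (F l k).re ∈ Icc (a₀ + δ₁) (b₀ - δ₁))
    (hcontr : ∀ l ∈ Icc a₀ b₀, ∀ k ∈ Icc (-κ₀) κ₀, κ₁ ^ 2 * ‖F' l k‖ ≤ 1 - δ₁)
    -- λ_κ^∞ : the unique solution in [a₀,b₀] of λ = λ_κ − κ² Re F(λ,κ)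
    (lamInf : ℝ → ℝ)
    (hfix : ∀ k : ℝ, k ≠ 0 → |k| ≤ κ₁ → lamInf k ∈ Icc a₀ b₀ ∧
      lamInf k = lam k - k ^ 2 * (F (lamInf k) k).re ∧
      (∀ l' ∈ Icc a₀ b₀, l' = lam k - k ^ 2 * (F l' k).re → l' = lamInf k))
    (p q : ℝ) (hp : 0 ≤ p) (hq : 0 ≤ q) :
    ∀ z : ℝ → ℂ,
      (∀ k : ℝ, z k = (lamInf k : ℂ) - Complex.I * (k : ℂ) ^ 2 * ((F (lamInf k) k).im : ℂ)) →
      ∃ C > 0, ∃ κ₂ : ℝ, 0 < κ₂ ∧ κ₂ ≤ κ₁ ∧ ∀ k : ℝ, k ≠ 0 → |k| ≤ κ₂ →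
        (p - q + 1 < 0 →
          (∫ l in a₀..b₀, |l - (z k).re| ^ p / ‖(l : ℂ) - z k‖ ^ q)
            ≤ C * |k| ^ (2 * (p - q + 1))) ∧
        (p - q + 1 = 0 →
          (∫ l in a₀..b₀, |l - (z k).re| ^ p / ‖(l : ℂ) - z k‖ ^ q)
            ≤ C * abs (Real.log (abs k))) ∧
        (0 < p - q + 1 →
          (∫ l in a₀..b₀, |l - (z k).re| ^ p / ‖(l : ℂ) - z k‖ ^ q) ≤ C) := by
  intro z hz
  obtain ⟨M, hM⟩ := hH0b
  set M' : ℝ := max M 1 with hM'def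
  have hM'1 : (1:ℝ) ≤ M' := le_max_right _ _
  have hM'0 : (0:ℝ) < M' := by linarith
  have h0κ : (0:ℝ) ∈ Icc (-κ₀) κ₀ := ⟨by linarith, hκ₀.le⟩
  obtain ⟨c₀, hc₀pos, hc₀⟩ := hH2 0 h0κ
  set m : ℝ := c₀ / 2 with hmdef
  have hmpos : 0 < m := by positivity
  obtain ⟨δF, hδF, hFc⟩ := Metric.continuousWithinAt_iff.mp hH0c (c₀/2) (by positivity)
  obtain ⟨δl, hδl, hlamc⟩ := Metric.tendsto_nhds_nhds.mp hH0a (δF/2) (by positivity)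
  set D : ℝ := b₀ - a₀ with hDdef
  have hD : 0 < D := by rw [hDdef]; linarith
  set C : ℝ := max (2*(1+1/(-(p-q+1))) * m^(p-q+1))
      (max (|2 + 2*Real.log D - 2*Real.log m| + 4)
        (2*(1+1/(p-q+1)) * D^(p-q+1))) + 1 with hCdef
  have hC1 : 2*(1+1/(-(p-q+1))) * m^(p-q+1) ≤ C := by
    rw [hCdef]
    exact (le_max_left _ _).trans (le_add_of_nonneg_right zero_le_one)
  have hC2 : |2 + 2*Real.log D - 2*Real.log m| + 4 ≤ C := by
    rw [hCdef]
    exact ((le_max_left _ _).trans (le_max_right _ _)).trans (le_add_of_nonneg_right zero_le_one)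
  have hC3 : 2*(1+1/(p-q+1)) * D^(p-q+1) ≤ C := by
    rw [hCdef]
    exact ((le_max_right _ _).trans (le_max_right _ _)).trans (le_add_of_nonneg_right zero_le_one)
  have hCpos : 0 < C := by
    have h4 : (0:ℝ) < |2 + 2*Real.log D - 2*Real.log m| + 4 := by positivity
    linarith
  refine ⟨C, hCpos, min (min κ₁ (Real.exp (-1)))
    (min (Real.sqrt (D / M')) (min (δl/2) (min (δF/2) (Real.sqrt (δF/(2*M')))))), ?_, ?_, ?_⟩
  · positivity
  · exact le_trans (min_le_left _ _) (min_le_left _ _)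
  intro k hk0 hk2
  have hkA : |k| ≤ κ₁ := le_trans hk2 (le_trans (min_le_left _ _) (min_le_left _ _))
  have hkexp : |k| ≤ Real.exp (-1) := le_trans hk2 (le_trans (min_le_left _ _) (min_le_right _ _))
  have hksq : |k| ≤ Real.sqrt (D/M') :=
    le_trans hk2 (le_trans (min_le_right _ _) (min_le_left _ _))
  have hkδl : |k| ≤ δl/2 := le_trans hk2 (le_trans (min_le_right _ _)
    (le_trans (min_le_right _ _) (min_le_left _ _)))
  have hkδF : |k| ≤ δF/2 := le_trans hk2 (le_trans (min_le_right _ _)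
    (le_trans (min_le_right _ _) (le_trans (min_le_right _ _) (min_le_left _ _))))
  have hkδF2 : |k| ≤ Real.sqrt (δF/(2*M')) := le_trans hk2 (le_trans (min_le_right _ _)
    (le_trans (min_le_right _ _) (le_trans (min_le_right _ _) (min_le_right _ _))))
  have hkabs : 0 < |k| := abs_pos.mpr hk0
  have sq_le : ∀ x : ℝ, 0 ≤ x → |k| ≤ Real.sqrt x → k^2 ≤ x := by
    intro x hx hkx
    have h1 : |k|^2 ≤ (Real.sqrt x)^2 := pow_le_pow_left₀ (abs_nonneg k) hkx 2
    rwa [sq_abs, Real.sq_sqrt hx] at h1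
  have hkD : k^2 ≤ D/M' := sq_le _ (by positivity) hksq
  have hkF : k^2 ≤ δF/(2*M') := sq_le _ (by positivity) hkδF2
  have hkk₀ : k ∈ Icc (-κ₀) κ₀ := by
    have := abs_le.mp (hkA.trans hκ₁')
    exact ⟨this.1, this.2⟩
  obtain ⟨hrmem, hrfix, _⟩ := hfix k hk0 hkA
  set r := lamInf k with hrdef
  have hrab : r ∈ Icc a b := ⟨le_trans ha.le hrmem.1, le_trans hrmem.2 hb.le⟩
  have hFb : ‖F r k‖ ≤ M' := le_trans (hM r hrab k hkk₀) (le_max_left _ _)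
  have hreF : |(F r k).re| ≤ M' := le_trans (Complex.abs_re_le_norm _) hFb
  have hk2pos : (0:ℝ) < k^2 := by positivity
  have hdist1 : |r - l₀| < δF := by
    have h1 : |lam k - l₀| < δF/2 := by
      have : dist k 0 < δl := by rw [Real.dist_eq, sub_zero]; linarith
      have := hlamc this
      rwa [Real.dist_eq] at this
    have h2 : |k^2 * (F r k).re| ≤ δF/2 := by
      rw [abs_mul, abs_of_nonneg (sq_nonneg k)]
      calc k^2 * |(F r k).re| ≤ k^2 * M' := mul_le_mul_of_nonneg_left hreF (sq_nonneg k)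
        _ ≤ (δF/(2*M')) * M' := mul_le_mul_of_nonneg_right hkF hM'0.le
        _ = δF/2 := by field_simp
    have heq : r - l₀ = (lam k - l₀) - k^2*(F r k).re := by
      conv_lhs => rw [hrfix]
      ring
    rw [abs_lt] at h1 ⊢
    rw [abs_le] at h2
    constructor <;> (rw [heq]; linarith [h1.1, h1.2, h2.1, h2.2])
  have hFdist : dist (F r k) (F l₀ 0) < c₀/2 := by
    have hmemS : ((r, k) : ℝ × ℝ) ∈ Icc a b ×ˢ Icc (-κ₀) κ₀ := ⟨hrab, hkk₀⟩
    have hd : dist ((r, k) : ℝ × ℝ) ((l₀, 0) : ℝ × ℝ) < δF := by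
      rw [Prod.dist_eq]
      apply max_lt
      · rw [Real.dist_eq]; exact hdist1
      · rw [Real.dist_eq, sub_zero]
        calc |k| ≤ δF/2 := hkδF
          _ < δF := by linarith
    exact hFc hmemS hd
  have hIm : m ≤ (F r k).im := by
    have h1 : |(F r k).im - (F l₀ 0).im| ≤ dist (F r k) (F l₀ 0) := by
      rw [Complex.dist_eq]
      have h := Complex.abs_im_le_norm (F r k - F l₀ 0)
      simpa using h
    have h2 : c₀ ≤ (F l₀ 0).im := hc₀ l₀ ⟨hl₀.1.le, hl₀.2.le⟩
    rw [abs_le] at h1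
    have := h1.1
    rw [hmdef]
    linarith [hFdist]
  set ε := k^2 * (F r k).im with hεdef
  have hεpos : 0 < ε := mul_pos hk2pos (lt_of_lt_of_le hmpos hIm)
  have hεlow : m * k^2 ≤ ε := by
    rw [hεdef, mul_comm m (k^2)]
    exact mul_le_mul_of_nonneg_left hIm (sq_nonneg k)
  have hImM : (F r k).im ≤ M' := le_trans (le_trans (le_abs_self _) (Complex.abs_im_le_norm _)) hFb
  have hεup : ε ≤ M' * k^2 := by
    rw [hεdef, mul_comm M' (k^2)]
    exact mul_le_mul_of_nonneg_left hImM (sq_nonneg k)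
  have hεD : ε ≤ D := by
    calc ε ≤ M' * k^2 := hεup
      _ ≤ M' * (D/M') := mul_le_mul_of_nonneg_left hkD hM'0.le
      _ = D := by field_simp
  have hzre : (z k).re = r := by
    rw [hz k]
    simp [pow_two, Complex.mul_re, Complex.mul_im]
    rfl
  have hzim : (z k).im = -ε := by
    rw [hz k, hεdef]
    simp [pow_two, Complex.mul_im, Complex.mul_re]
    left; rfl
  have him : ε ≤ |(z k).im| := by rw [hzim, abs_neg, abs_of_pos hεpos]
  have main : (∫ l in a₀..b₀, |l - (z k).re| ^ p / ‖(l : ℂ) - z k‖ ^ q)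
      ≤ 2 * (ε^(p-q+1) + ∫ t in ε..D, t^(p-q)) := by
    have h := aux_integral_bound a₀ b₀ p q ε hab.le hp hq (z k)
      (by rw [hzre]; exact hrmem.1) (by rw [hzre]; exact hrmem.2) hεpos him hεD
    exact h
  refine ⟨?_, ?_, ?_⟩
  · -- case 1 : p - q + 1 < 0
    intro hcase
    have hεs : ε^(p-q+1) ≤ (m*k^2)^(p-q+1) :=
      Real.rpow_le_rpow_of_nonpos (mul_pos hmpos hk2pos) hεlow hcase.le
    have hsplit : (m*k^2)^(p-q+1) = m^(p-q+1) * |k|^(2*(p-q+1)) := by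
      rw [Real.mul_rpow hmpos.le (sq_nonneg k)]
      congr 1
      rw [← sq_abs k, ← Real.rpow_natCast |k| 2, ← Real.rpow_mul (abs_nonneg k)]
      norm_num
    have hint := aux_case1 D ε (p-q) hεpos hεD (by linarith)
    have hcpos : (0:ℝ) ≤ 1 + 1/(-(p-q+1)) := by
      have : (0:ℝ) < 1/(-(p-q+1)) := div_pos one_pos (by linarith)
      linarith
    calc (∫ l in a₀..b₀, |l - (z k).re| ^ p / ‖(l : ℂ) - z k‖ ^ q)
        ≤ 2 * (ε^(p-q+1) + ∫ t in ε..D, t^(p-q)) := main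
      _ ≤ 2 * ((1+1/(-(p-q+1))) * ε^(p-q+1)) := by linarith
      _ = 2 * (1+1/(-(p-q+1))) * ε^(p-q+1) := by ring
      _ ≤ 2 * (1+1/(-(p-q+1))) * (m^(p-q+1) * |k|^(2*(p-q+1))) := by
          apply mul_le_mul_of_nonneg_left _ (by linarith)
          rw [← hsplit]; exact hεs
      _ = (2 * (1+1/(-(p-q+1))) * m^(p-q+1)) * |k|^(2*(p-q+1)) := by ring
      _ ≤ C * |k|^(2*(p-q+1)) :=
          mul_le_mul_of_nonneg_right hC1 (Real.rpow_nonneg (abs_nonneg k) _)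
  · -- case 2 : p - q + 1 = 0
    intro hcase
    have hpq : p - q = -1 := by linarith
    have hε0 : ε^(p-q+1) = 1 := by rw [hcase, Real.rpow_zero]
    have hint : (∫ t in ε..D, t^(p-q)) = ∫ t in ε..D, t^(-1:ℝ) := by rw [hpq]
    have h2 := aux_case2 D ε hεpos hεD
    rw [show (-1:ℝ)+1 = 0 by norm_num, Real.rpow_zero] at h2
    have hlogε : Real.log m + 2*Real.log (abs k) ≤ Real.log ε := by
      have h3 : Real.log (m*k^2) ≤ Real.log ε := Real.log_le_log (by positivity) hεlow
      have h4 : Real.log (m*k^2) = Real.log m + 2*Real.log (abs k) := by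
        rw [Real.log_mul hmpos.ne' hk2pos.ne', ← sq_abs k, Real.log_pow]
        push_cast; ring
      linarith
    have hlogk : Real.log (abs k) ≤ -1 := by
      have := Real.log_le_log hkabs hkexp
      rwa [Real.log_exp] at this
    have habsl : |Real.log (abs k)| = -Real.log (abs k) := abs_of_neg (by linarith)
    have hL1 : (1:ℝ) ≤ |Real.log (abs k)| := by rw [habsl]; linarith
    have hbound : (∫ l in a₀..b₀, |l - (z k).re| ^ p / ‖(l : ℂ) - z k‖ ^ q)
        ≤ 2 + 2*Real.log D - 2*Real.log m + 4*|Real.log (abs k)| := by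
      calc (∫ l in a₀..b₀, |l - (z k).re| ^ p / ‖(l : ℂ) - z k‖ ^ q)
          ≤ 2 * (ε^(p-q+1) + ∫ t in ε..D, t^(p-q)) := main
        _ = 2 * (1 + ∫ t in ε..D, t^(-1:ℝ)) := by rw [hε0, hint]
        _ ≤ 2 * (1 + Real.log D - Real.log ε) := by linarith
        _ ≤ 2 + 2*Real.log D - 2*Real.log m + 4*|Real.log (abs k)| := by
            rw [habsl]; linarith
    have habs2 : 2 + 2*Real.log D - 2*Real.log m ≤ |2 + 2*Real.log D - 2*Real.log m| :=
      le_abs_self _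
    have habs3 : (0:ℝ) ≤ |2 + 2*Real.log D - 2*Real.log m| := abs_nonneg _
    calc (∫ l in a₀..b₀, |l - (z k).re| ^ p / ‖(l : ℂ) - z k‖ ^ q)
        ≤ 2 + 2*Real.log D - 2*Real.log m + 4*|Real.log (abs k)| := hbound
      _ ≤ (|2 + 2*Real.log D - 2*Real.log m| + 4) * |Real.log (abs k)| := by
          have := aux_log_combine (2 + 2*Real.log D - 2*Real.log m) (|Real.log (abs k)|) hL1
          linarith
      _ ≤ C * |Real.log (abs k)| := mul_le_mul_of_nonneg_right hC2 (abs_nonneg _)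
  · -- case 3 : 0 < p - q + 1
    intro hcase
    have h3 := aux_case3 D ε (p-q) hεpos hεD hcase
    calc (∫ l in a₀..b₀, |l - (z k).re| ^ p / ‖(l : ℂ) - z k‖ ^ q)
        ≤ 2 * (ε^(p-q+1) + ∫ t in ε..D, t^(p-q)) := main
      _ ≤ 2 * ((1+1/(p-q+1)) * D^(p-q+1)) := by linarith
      _ = 2*(1+1/(p-q+1)) * D^(p-q+1) := by ring
      _ ≤ C := hC3
end

section
/- There exists C > 0 such that for all λ ∈ [a₀,b₀] and 0 < |κ| ≤ κ₁: |G(λ,κ) − G₁(λ,κ)| ≤ Cκ²·|Ĝ(λ,κ)|·sup_{[a₀,b₀]×[−κ₀,κ₀]}|F'|, and |G(λ,κ) − G₁(λ,κ)| ≤ Cκ²·|Ĝ(λ,κ)|²·|λ − λ_κ^∞|^{α+1}. -/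
open MeasureTheory Filter Set Topology

lemma aux_quad (δ u s x y : ℝ) (hδ : 0 < δ) (hδ1 : δ ≤ 1) (hs : 0 ≤ s)
    (hx : δ * |u| ≤ |x|) (hy : s - |u| ≤ |y|) :
    (δ/3)^2 * (u^2 + s^2) ≤ x^2 + y^2 := by
  have hu := abs_nonneg u
  have h1 : δ^2 * u^2 ≤ x^2 := by
    have h0 := pow_le_pow_left₀ (by positivity) hx 2
    have := sq_abs x; have := sq_abs u; nlinarith
  rcases le_or_gt s (2*|u|) with h | h
  · nlinarith [sq_abs u, sq_nonneg y, sq_nonneg δ,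
      mul_nonneg (sq_nonneg δ) (mul_nonneg (by linarith : (0:ℝ) ≤ 2*|u| - s) (by linarith : (0:ℝ) ≤ 2*|u| + s))]
  · have h2 : (s - |u|)^2 ≤ y^2 := by
      have h3 := pow_le_pow_left₀ (by linarith) hy 2
      have := sq_abs y; nlinarith
    have h4 : s^2/4 ≤ y^2 := by
      nlinarith [mul_nonneg (by linarith : (0:ℝ) ≤ s - |u| - s/2) (by linarith : (0:ℝ) ≤ s - |u| + s/2)]
    have h5 : δ^2 ≤ 1 := by nlinarith
    nlinarith [sq_abs u, sq_nonneg u, sq_nonneg s]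

set_option maxHeartbeats 1000000 in
/-- Lemma 2.7: pointwise bounds on G − G₁ in terms of Ĝ. -/
theorem stmt_6
    (a a₀ b₀ b l₀ κ₀ α : ℝ)
    (ha : a < a₀) (hab : a₀ < b₀) (hb : b₀ < b)
    (hl₀ : l₀ ∈ Ioo a₀ b₀) (hκ₀ : 0 < κ₀) (hα : α ∈ Ioc (0:ℝ) 1)
    (lam : ℝ → ℝ) (F F' : ℝ → ℝ → ℂ)
    -- (H0)(a)
    (hH0a : Tendsto lam (𝓝 0) (𝓝 l₀))
    -- (H0)(b)
    (hH0b : ∃ M : ℝ, ∀ l ∈ Icc a b, ∀ k ∈ Icc (-κ₀) κ₀, ‖F l k‖ ≤ M)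
    (hH0c : ContinuousWithinAt (fun p : ℝ × ℝ => F p.1 p.2)
      (Icc a b ×ˢ Icc (-κ₀) κ₀) (l₀, 0))
    -- (H1): F(·,κ) is C¹ on [a,b] with derivative F'
    (hH1 : ∀ k ∈ Icc (-κ₀) κ₀, ∀ l ∈ Icc a b,
      HasDerivWithinAt (fun x => F x k) (F' l k) (Icc a b) l)
    (hH1cont : ∀ k ∈ Icc (-κ₀) κ₀, ContinuousOn (fun l => F' l k) (Icc a b))
    -- (H1)(a): F' bounded
    (hH1a : ∃ M' : ℝ, ∀ l ∈ Icc a b, ∀ k ∈ Icc (-κ₀) κ₀, ‖F' l k‖ ≤ M')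
    -- (H1)(b): F' is α-Hölder on [a₀,b₀] uniformly in κ
    (hH1b : ∃ L : ℝ, ∀ k ∈ Icc (-κ₀) κ₀, ∀ l₁ ∈ Icc a₀ b₀, ∀ l₂ ∈ Icc a₀ b₀,
      ‖F' l₁ k - F' l₂ k‖ ≤ L * |l₁ - l₂| ^ α)
    -- (H2): inf of Im F on [a₀,b₀] is positive
    (hH2 : ∀ k ∈ Icc (-κ₀) κ₀, ∃ c > 0, ∀ l ∈ Icc a₀ b₀, c ≤ (F l k).im)
    -- choice of δ₁ and κ₁
    (δ₁ κ₁ : ℝ)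
    (hδ₁ : 0 < δ₁) (hδ₁' : δ₁ < min (l₀ - a₀) (min (b₀ - l₀) 1))
    (hκ₁ : 0 < κ₁) (hκ₁' : κ₁ ≤ κ₀)
    (hmap : ∀ k : ℝ, |k| ≤ κ₁ → ∀ l ∈ Icc a₀ b₀,
      lam k - k ^ 2 * (F l k).re ∈ Icc (a₀ + δ₁) (b₀ - δ₁))
    (hcontr : ∀ l ∈ Icc a₀ b₀, ∀ k ∈ Icc (-κ₀) κ₀, κ₁ ^ 2 * ‖F' l k‖ ≤ 1 - δ₁)
    -- D(λ,κ) ≠ 0 on [a,b] for 0 < |κ| ≤ κ₁ (so that G is well defined)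
    (hDne : ∀ k : ℝ, k ≠ 0 → |k| ≤ κ₁ → ∀ l ∈ Icc a b,
      (lam k : ℂ) - (l : ℂ) - (k : ℂ) ^ 2 * F l k ≠ 0)
    -- λ_κ^∞ : the unique solution in [a₀,b₀] of λ = λ_κ − κ² Re F(λ,κ)
    (lamInf : ℝ → ℝ)
    (hfix : ∀ k : ℝ, k ≠ 0 → |k| ≤ κ₁ → lamInf k ∈ Icc a₀ b₀ ∧
      lamInf k = lam k - k ^ 2 * (F (lamInf k) k).re ∧
      (∀ l' ∈ Icc a₀ b₀, l' = lam k - k ^ 2 * (F l' k).re → l' = lamInf k))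
    :
    ∀ G G1 Ghat : ℝ → ℝ → ℂ,
      (∀ l k : ℝ, G l k = ((lam k : ℂ) - l - (k : ℂ) ^ 2 * F l k)⁻¹) →
      (∀ l k : ℝ, G1 l k = ((lam k : ℂ) - l - (k : ℂ) ^ 2 * F (lamInf k) k
          - (k : ℂ) ^ 2 * F' (lamInf k) k * ((l : ℂ) - (lamInf k : ℂ)))⁻¹) →
      (∀ l k : ℝ, Ghat l k = ((lamInf k : ℂ) - l
          - Complex.I * (k : ℂ) ^ 2 * ((F (lamInf k) k).im : ℂ))⁻¹) →
      ∃ C > 0, ∀ l ∈ Icc a₀ b₀, ∀ k : ℝ, k ≠ 0 → |k| ≤ κ₁ →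
        (∀ M : ℝ, (∀ l' ∈ Icc a₀ b₀, ∀ k' ∈ Icc (-κ₀) κ₀, ‖F' l' k'‖ ≤ M) →
          ‖G l k - G1 l k‖ ≤ C * k ^ 2 * ‖Ghat l k‖ * M) ∧
        ‖G l k - G1 l k‖ ≤ C * k ^ 2 * ‖Ghat l k‖ ^ 2 * |l - lamInf k| ^ (α + 1) := by
  intro G G1 Ghat hG hG1 hGhat
  obtain ⟨L, hL⟩ := hH1b
  have hsub : Icc a₀ b₀ ⊆ Icc a b := Icc_subset_Icc ha.le hb.le
  have ha₀mem : a₀ ∈ Icc a₀ b₀ := ⟨le_refl _, hab.le⟩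
  have hb₀mem : b₀ ∈ Icc a₀ b₀ := ⟨hab.le, le_refl _⟩
  have h0mem : (0:ℝ) ∈ Icc (-κ₀) κ₀ := ⟨by linarith, hκ₀.le⟩
  have hL0 : 0 ≤ L := by
    have h1 := hL 0 h0mem a₀ ha₀mem b₀ hb₀mem
    have h2 : (0:ℝ) < |a₀ - b₀| ^ α :=
      Real.rpow_pos_of_pos (by rw [abs_sub_comm, abs_of_pos (by linarith)]; linarith) α
    nlinarith [norm_nonneg (F' a₀ 0 - F' b₀ 0)]
  have hδ1lt1 : δ₁ < 1 := lt_of_lt_of_le hδ₁' (le_trans (min_le_right _ _) (min_le_right _ _))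
  refine ⟨9 * (L + 2) / δ₁^2, by positivity, ?_⟩
  intro l hl k hk0 hkκ₁
  have hkmem : k ∈ Icc (-κ₀) κ₀ := by
    have := abs_le.mp hkκ₁; constructor <;> [linarith [this.1]; linarith [this.2]]
  have hk2 : (0:ℝ) < k^2 := by positivity
  have hk2κ : k^2 ≤ κ₁^2 := by nlinarith [sq_abs k, pow_le_pow_left₀ (abs_nonneg k) hkκ₁ 2]
  obtain ⟨hli, hlifix, -⟩ := hfix k hk0 hkκ₁
  obtain ⟨cIm, hcIm, hImF⟩ := hH2 k hkmem
  -- rewrite the goal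
  rw [hG l k, hG1 l k, hGhat l k]
  set li : ℝ := lamInf k with hlidef
  set u : ℝ := l - li with hudef
  set s : ℝ := k^2 * (F li k).im with hsdef
  set D : ℂ := (lam k : ℂ) - (l : ℂ) - (k : ℂ)^2 * F l k with hD
  set D1 : ℂ := (lam k : ℂ) - (l : ℂ) - (k : ℂ)^2 * F li k
      - (k : ℂ)^2 * F' li k * ((l : ℂ) - (li : ℂ)) with hD1
  set Dh : ℂ := (li : ℂ) - (l : ℂ) - Complex.I * (k : ℂ)^2 * (((F li k).im : ℝ) : ℂ) with hDh
  set R : ℂ := F l k - F li k - F' li k * ((l : ℂ) - (li : ℂ)) with hR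
  
  have hnormsq : ∀ z : ℂ, ‖z‖^2 = z.re^2 + z.im^2 := fun z => by
    rw [Complex.sq_norm, Complex.normSq_apply]; ring
  have hs0 : 0 < s := mul_pos hk2 (lt_of_lt_of_le hcIm (hImF li hli))
  have hFlim : 0 < (F l k).im := lt_of_lt_of_le hcIm (hImF l hl)
  have hlam : lam k = li + k^2 * (F li k).re := by linarith [hlifix]
  -- pointwise bound on F'
  have hFd' : ∀ t ∈ Icc a₀ b₀, k^2 * ‖F' t k‖ ≤ 1 - δ₁ := by
    intro t ht
    have h1 := hcontr t ht k hkmem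
    nlinarith [norm_nonneg (F' t k)]
  -- mean value bound for F
  have hFdiff : ‖F l k - F li k‖ ≤ ((1-δ₁)/k^2) * |u| := by
    have h := Convex.norm_image_sub_le_of_norm_hasDerivWithin_le
      (f := fun t : ℝ => F t k) (f' := fun t : ℝ => F' t k)
      (C := (1-δ₁)/k^2) (s := Icc a₀ b₀)
      (fun t ht => (hH1 k hkmem t (hsub ht)).mono hsub)
      (fun t ht => by rw [le_div_iff₀ hk2]; linarith [hFd' t ht])
      (convex_Icc _ _) hli hl
    simpa [Real.norm_eq_abs] using h
  have hRe1 : |(F l k).re - (F li k).re| ≤ ((1-δ₁)/k^2) * |u| := by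
    refine le_trans ?_ hFdiff
    rw [← Complex.sub_re]
    exact Complex.abs_re_le_norm _
  have hIm1 : |(F l k).im - (F li k).im| ≤ ((1-δ₁)/k^2) * |u| := by
    refine le_trans ?_ hFdiff
    rw [← Complex.sub_im]
    exact Complex.abs_im_le_norm _
  have hdivmul : k^2 * (((1-δ₁)/k^2) * |u|) = (1-δ₁) * |u| := by field_simp
  -- real and imaginary parts
  have hDre : D.re = lam k - l - k^2 * (F l k).re := by
    rw [hD]; simp [Complex.sub_re, Complex.mul_re, pow_two]
  have hDim : D.im = -(k^2 * (F l k).im) := by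
    rw [hD]; simp [Complex.sub_im, Complex.mul_im, pow_two]
  have hD1re : D1.re = lam k - l - k^2 * (F li k).re - k^2 * ((F' li k).re * u) := by
    rw [hD1, hudef]
    simp [Complex.sub_re, Complex.sub_im, Complex.mul_re, Complex.mul_im, pow_two]; ring
  have hD1im : D1.im = -(k^2 * (F li k).im) - k^2 * ((F' li k).im * u) := by
    rw [hD1, hudef]
    simp [Complex.sub_re, Complex.sub_im, Complex.mul_re, Complex.mul_im, pow_two]; ring
  have hDhre : Dh.re = -u := by
    rw [hDh, hudef]; simp [Complex.sub_re, Complex.mul_re, Complex.mul_im, pow_two]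
  have hDhim : Dh.im = -s := by
    rw [hDh, hsdef]; simp [Complex.sub_im, Complex.mul_im, Complex.mul_re, pow_two]
  have hDhsq : ‖Dh‖^2 = u^2 + s^2 := by rw [hnormsq, hDhre, hDhim]; ring
  have hu0 := abs_nonneg u
  -- lower bound for |D.re|
  have hx : δ₁ * |u| ≤ |D.re| := by
    have e : D.re + u = k^2 * ((F li k).re - (F l k).re) := by
      rw [hDre, hudef, hlam]; ring
    have h1 : |D.re + u| ≤ (1-δ₁)*|u| := by
      rw [e, abs_mul, abs_of_pos hk2, abs_sub_comm]
      calc k^2 * |(F l k).re - (F li k).re| ≤ k^2 * (((1-δ₁)/k^2) * |u|) :=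
            mul_le_mul_of_nonneg_left hRe1 hk2.le
        _ = (1-δ₁)*|u| := hdivmul
    have h2 : |u| ≤ |D.re + u| + |D.re| := by
      calc |u| = |(D.re + u) + (-D.re)| := by congr 1; ring
        _ ≤ |D.re + u| + |(-D.re)| := abs_add_le _ _
        _ = |D.re + u| + |D.re| := by rw [abs_neg]
    linarith
  -- lower bound for |D.im|
  have hy : s - |u| ≤ |D.im| := by
    rw [hDim, abs_neg, abs_of_pos (mul_pos hk2 hFlim)]
    have h1 : (F li k).im - (F l k).im ≤ ((1-δ₁)/k^2) * |u| := by
      have := abs_le.mp hIm1; linarith [this.1]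
    have h2 : k^2 * ((F li k).im - (F l k).im) ≤ (1-δ₁)*|u| := by
      rw [← hdivmul]; exact mul_le_mul_of_nonneg_left h1 hk2.le
    have h3 : s - k^2 * (F l k).im ≤ (1-δ₁)*|u| := by rw [hsdef]; linarith [h2]
    nlinarith [hδ₁, hu0]
  -- lower bounds for D1
  have hFdli : k^2 * ‖F' li k‖ ≤ 1 - δ₁ := hFd' li hli
  have hx1 : δ₁ * |u| ≤ |D1.re| := by
    have e : D1.re + u = -(k^2 * ((F' li k).re * u)) := by
      rw [hD1re, hudef, hlam]; ring
    have h1 : |D1.re + u| ≤ (1-δ₁)*|u| := by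
      rw [e, abs_neg, abs_mul, abs_of_pos hk2, abs_mul]
      have hre : |(F' li k).re| ≤ ‖F' li k‖ := by
        exact Complex.abs_re_le_norm _
      have h5 : k^2 * |(F' li k).re| ≤ 1 - δ₁ :=
        le_trans (mul_le_mul_of_nonneg_left hre hk2.le) hFdli
      calc k^2 * (|(F' li k).re| * |u|) = k^2 * |(F' li k).re| * |u| := by ring
        _ ≤ (1-δ₁) * |u| := mul_le_mul_of_nonneg_right h5 hu0
    have h2 : |u| ≤ |D1.re + u| + |D1.re| := by
      calc |u| = |(D1.re + u) + (-D1.re)| := by congr 1; ring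
        _ ≤ |D1.re + u| + |(-D1.re)| := abs_add_le _ _
        _ = |D1.re + u| + |D1.re| := by rw [abs_neg]
    linarith
  have hy1 : s - |u| ≤ |D1.im| := by
    have e : D1.im + s = -(k^2 * ((F' li k).im * u)) := by
      rw [hD1im, hsdef]; ring
    have h1 : |D1.im + s| ≤ (1-δ₁)*|u| := by
      rw [e, abs_neg, abs_mul, abs_of_pos hk2, abs_mul]
      have him : |(F' li k).im| ≤ ‖F' li k‖ := by
        exact Complex.abs_im_le_norm _
      have h5 : k^2 * |(F' li k).im| ≤ 1 - δ₁ :=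
        le_trans (mul_le_mul_of_nonneg_left him hk2.le) hFdli
      calc k^2 * (|(F' li k).im| * |u|) = k^2 * |(F' li k).im| * |u| := by ring
        _ ≤ (1-δ₁) * |u| := mul_le_mul_of_nonneg_right h5 hu0
    have h2 : s ≤ |D1.im + s| + |D1.im| := by
      calc s ≤ |s| := le_abs_self s
        _ = |(D1.im + s) + (-D1.im)| := by congr 1; ring
        _ ≤ |D1.im + s| + |(-D1.im)| := abs_add_le _ _
        _ = |D1.im + s| + |D1.im| := by rw [abs_neg]
    have h6 : (1-δ₁)*|u| ≤ |u| := by nlinarith [mul_nonneg hδ₁.le hu0]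
    linarith
  -- norm lower bounds
  have hDhpos : 0 < ‖Dh‖ := by nlinarith [norm_nonneg Dh, hDhsq, hs0, sq_nonneg u]
  have hDlow : (δ₁/3) * ‖Dh‖ ≤ ‖D‖ := by
    apply le_of_pow_le_pow_left₀ two_ne_zero (norm_nonneg D)
    rw [mul_pow, hDhsq, hnormsq]
    exact aux_quad δ₁ u s D.re D.im hδ₁ hδ1lt1.le hs0.le hx hy
  have hD1low : (δ₁/3) * ‖Dh‖ ≤ ‖D1‖ := by
    apply le_of_pow_le_pow_left₀ two_ne_zero (norm_nonneg D1)
    rw [mul_pow, hDhsq, hnormsq]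
    exact aux_quad δ₁ u s D1.re D1.im hδ₁ hδ1lt1.le hs0.le hx1 hy1
  have hDpos : 0 < ‖D‖ := lt_of_lt_of_le (by positivity) hDlow
  have hD1pos : 0 < ‖D1‖ := lt_of_lt_of_le (by positivity) hD1low
  have hDne0 : D ≠ 0 := norm_pos_iff.mp hDpos
  have hD1ne0 : D1 ≠ 0 := norm_pos_iff.mp hD1pos
  have hDhne0 : Dh ≠ 0 := norm_pos_iff.mp hDhpos
  -- difference of inverses
  have hnum : D1 - D = (k:ℂ)^2 * R := by rw [hD1, hD, hR]; ring
  have hknorm : ‖((k:ℂ))^2‖ = k^2 := by rw [norm_pow]; simp [sq_abs]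
  have hinvdiff : ‖D⁻¹ - D1⁻¹‖ = k^2 * ‖R‖ / (‖D‖ * ‖D1‖) := by
    rw [inv_sub_inv hDne0 hD1ne0, hnum, norm_div, norm_mul, norm_mul, hknorm]
  have hDDpos : 0 < ‖D‖ * ‖D1‖ := mul_pos hDpos hD1pos
  -- master bound
  have master : ∀ B : ℝ, 0 ≤ B → ‖R‖ ≤ B →
      ‖D⁻¹ - D1⁻¹‖ ≤ (9/δ₁^2) * k^2 * (‖Dh‖⁻¹)^2 * B := by
    intro B hB0 hBR
    rw [hinvdiff, div_le_iff₀ hDDpos]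
    have h1 : (δ₁/3*‖Dh‖)^2 ≤ ‖D‖*‖D1‖ := by
      rw [pow_two]
      exact mul_le_mul hDlow hD1low (by positivity) hDpos.le
    have h3 : ‖Dh‖⁻¹*‖Dh‖ = 1 := inv_mul_cancel₀ hDhpos.ne'
    have h5 : (δ₁/3)^2*(9/δ₁^2) = 1 := by field_simp; ring
    have h2 : (9/δ₁^2) * k^2 * (‖Dh‖⁻¹)^2 * B * (δ₁/3*‖Dh‖)^2 = k^2 * B := by
      calc (9/δ₁^2) * k^2 * (‖Dh‖⁻¹)^2 * B * (δ₁/3*‖Dh‖)^2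
          = (k^2*B) * ((δ₁/3)^2*(9/δ₁^2)) * (‖Dh‖⁻¹*‖Dh‖)^2 := by ring
        _ = k^2 * B := by rw [h3, h5]; ring
    calc k^2*‖R‖ ≤ k^2*B := mul_le_mul_of_nonneg_left hBR hk2.le
      _ = (9/δ₁^2) * k^2 * (‖Dh‖⁻¹)^2 * B * (δ₁/3*‖Dh‖)^2 := h2.symm
      _ ≤ (9/δ₁^2) * k^2 * (‖Dh‖⁻¹)^2 * B * (‖D‖*‖D1‖) := by
          apply mul_le_mul_of_nonneg_left h1 (by positivity)
  rw [norm_inv]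
  have habsu : |u| ≤ ‖Dh‖ := by
    apply le_of_pow_le_pow_left₀ two_ne_zero (norm_nonneg Dh)
    rw [hDhsq, sq_abs]
    linarith [sq_nonneg s]
  constructor
  · -- first bound
    intro M hM
    have hM0 : 0 ≤ M := le_trans (norm_nonneg _) (hM li hli k hkmem)
    have hF2 : ‖F' li k * ((l:ℂ) - (li:ℂ))‖ ≤ M * |u| := by
      rw [norm_mul]
      have h3 : ‖((l:ℂ) - (li:ℂ))‖ = |u| := by
        rw [show ((l:ℂ) - (li:ℂ)) = ((u : ℝ) : ℂ) by rw [hudef]; push_cast; ring]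
        simp
      rw [h3]
      exact mul_le_mul_of_nonneg_right (hM li hli k hkmem) hu0
    have hF1 : ‖F l k - F li k‖ ≤ M * |u| := by
      have h := Convex.norm_image_sub_le_of_norm_hasDerivWithin_le
        (f := fun t : ℝ => F t k) (f' := fun t : ℝ => F' t k)
        (C := M) (s := Icc a₀ b₀)
        (fun t ht => (hH1 k hkmem t (hsub ht)).mono hsub)
        (fun t ht => hM t ht k hkmem)
        (convex_Icc _ _) hli hl
      simpa [Real.norm_eq_abs] using h
    have hRb : ‖R‖ ≤ 2*M*|u| := by
      rw [hR]
      calc ‖F l k - F li k - F' li k * ((l:ℂ) - (li:ℂ))‖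
          ≤ ‖F l k - F li k‖ + ‖F' li k * ((l:ℂ) - (li:ℂ))‖ := norm_sub_le _ _
        _ ≤ M * |u| + M * |u| := add_le_add hF1 hF2
        _ = 2*M*|u| := by ring
    refine le_trans (master (2*M*|u|) (by positivity) hRb) ?_
    have hkey : (‖Dh‖⁻¹)^2 * |u| ≤ ‖Dh‖⁻¹ := by
      have h4 : ‖Dh‖⁻¹ * |u| ≤ 1 := by
        rw [← inv_mul_cancel₀ hDhpos.ne']
        exact mul_le_mul_of_nonneg_left habsu (inv_nonneg.mpr hDhpos.le)
      calc (‖Dh‖⁻¹)^2 * |u| = ‖Dh‖⁻¹ * (‖Dh‖⁻¹ * |u|) := by ring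
        _ ≤ ‖Dh‖⁻¹ * 1 := mul_le_mul_of_nonneg_left h4 (inv_nonneg.mpr hDhpos.le)
        _ = ‖Dh‖⁻¹ := mul_one _
    have hC18 : (18:ℝ)/δ₁^2 ≤ 9*(L+2)/δ₁^2 := by
      apply div_le_div_of_nonneg_right ?_ (by positivity)
      linarith
    calc (9/δ₁^2) * k^2 * (‖Dh‖⁻¹)^2 * (2*M*|u|)
        = (18/δ₁^2) * (k^2*M) * ((‖Dh‖⁻¹)^2 * |u|) := by ring
      _ ≤ (18/δ₁^2) * (k^2*M) * ‖Dh‖⁻¹ := by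
          apply mul_le_mul_of_nonneg_left hkey (by positivity)
      _ ≤ (9*(L+2)/δ₁^2) * (k^2*M) * ‖Dh‖⁻¹ := by
          apply mul_le_mul_of_nonneg_right ?_ (inv_nonneg.mpr hDhpos.le)
          exact mul_le_mul_of_nonneg_right hC18 (by positivity)
      _ = 9*(L+2)/δ₁^2 * k^2 * ‖Dh‖⁻¹ * M := by ring
  · -- second bound
    have hru : |u|^α * |u| = |u|^(α+1) := by
      rcases eq_or_ne u 0 with h | h
      · rw [h, abs_zero, Real.zero_rpow (by linarith [hα.1]), Real.zero_rpow (by linarith [hα.1])]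
        ring
      · rw [Real.rpow_add (abs_pos.mpr h), Real.rpow_one]
    have hRb2 : ‖R‖ ≤ L * |u|^(α+1) := by
      rw [← hru]
      have hconv : Convex ℝ (Icc (min li l) (max li l)) := convex_Icc _ _
      have hsubset : Icc (min li l) (max li l) ⊆ Icc a₀ b₀ :=
        Icc_subset_Icc (le_min hli.1 hl.1) (max_le hli.2 hl.2)
      have habseq : |u| = max li l - min li l := by
        rw [hudef]
        rcases le_total li l with h | h
        · rw [max_eq_right h, min_eq_left h, abs_of_nonneg (by linarith)]
        · rw [max_eq_left h, min_eq_right h, abs_of_nonpos (by linarith)]; ring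
      have hmvt := Convex.norm_image_sub_le_of_norm_hasDerivWithin_le
        (f := fun t : ℝ => F t k - F' li k * (t:ℂ))
        (f' := fun t : ℝ => F' t k - F' li k)
        (C := L * |u|^α) (s := Icc (min li l) (max li l))
        (fun t ht => by
          have h1 : HasDerivAt (fun t : ℝ => F' li k * (t:ℂ)) (F' li k) t := by
            simpa using (Complex.ofRealCLM.hasDerivAt (x := t)).const_mul (F' li k)
          exact ((hH1 k hkmem t (hsub (hsubset ht))).mono
            (fun z hz => hsub (hsubset hz))).sub h1.hasDerivWithinAt)
        (fun t ht => by
          have h2 := hL k hkmem t (hsubset ht) li hli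
          have h3 : |t - li| ≤ |u| := by
            rw [habseq, abs_sub_le_iff]
            constructor
            · linarith [ht.2, min_le_left li l]
            · linarith [ht.1, le_max_left li l]
          have h4 : |t - li|^α ≤ |u|^α :=
            Real.rpow_le_rpow (abs_nonneg _) h3 hα.1.le
          calc ‖F' t k - F' li k‖ ≤ L * |t - li|^α := h2
            _ ≤ L * |u|^α := mul_le_mul_of_nonneg_left h4 hL0)
        hconv ⟨min_le_left _ _, le_max_left _ _⟩ ⟨min_le_right _ _, le_max_right _ _⟩
      have heq : F l k - F' li k * (l:ℂ) - (F li k - F' li k * (li:ℂ)) = R := by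
        rw [hR]; ring
      calc ‖R‖ = ‖F l k - F' li k * (l:ℂ) - (F li k - F' li k * (li:ℂ))‖ := by rw [heq]
        _ ≤ L * |u|^α * ‖l - li‖ := hmvt
        _ = L * |u|^α * |u| := by rw [Real.norm_eq_abs, ← hudef]
        _ = L * (|u|^α * |u|) := by ring
    have hB0 : 0 ≤ L * |u|^(α+1) :=
      mul_nonneg hL0 (Real.rpow_nonneg (abs_nonneg u) _)
    refine le_trans (master (L * |u|^(α+1)) hB0 hRb2) ?_
    have h9 : (9:ℝ)*L/δ₁^2 ≤ 9*(L+2)/δ₁^2 := by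
      apply div_le_div_of_nonneg_right ?_ (by positivity)
      linarith
    calc (9/δ₁^2) * k^2 * (‖Dh‖⁻¹)^2 * (L * |u|^(α+1))
        = (9*L/δ₁^2) * (k^2 * (‖Dh‖⁻¹)^2 * |u|^(α+1)) := by ring
      _ ≤ (9*(L+2)/δ₁^2) * (k^2 * (‖Dh‖⁻¹)^2 * |u|^(α+1)) := by
          apply mul_le_mul_of_nonneg_right h9 ?_
          have := Real.rpow_nonneg (abs_nonneg u) (α+1)
          positivity
      _ = 9*(L+2)/δ₁^2 * k^2 * (‖Dh‖⁻¹)^2 * |u|^(α+1) := by ring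
end

section
/- There exist C > 0 and κ₂ ∈ (0,κ₁] such that for all t ∈ ℝ and 0 < |κ| ≤ κ₂: |I₂(t,κ)| ≤ ∫_{a₀}^{b₀} |G(λ,κ) − G₁(λ,κ)| dλ ≤ Cκ², where I₂(t,κ) := (1/π)∫_{a₀}^{b₀} e^{−iλt} Im(G(λ,κ) − G₁(λ,κ)) dλ. -/
open MeasureTheory Filter Set Topology

section Helpers
open intervalIntegral

lemma sing_int_right {c q r : ℝ} (hr : -1 < r) (hcq : c ≤ q) :
    IntervalIntegrable (fun x => |x - c| ^ r) volume c q := by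
  have h0 : IntervalIntegrable (fun x : ℝ => (x - c) ^ r) volume c q := by
    simpa using (intervalIntegral.intervalIntegrable_rpow' (a := 0) (b := q - c) hr).comp_sub_right c
  rw [intervalIntegrable_iff] at h0 ⊢
  refine h0.congr_fun ?_ measurableSet_uIoc
  intro x hx
  rw [Set.uIoc_of_le hcq] at hx
  simp only []
  rw [abs_of_nonneg (by linarith [hx.1] : (0:ℝ) ≤ x - c)]

lemma sing_int_left {p c r : ℝ} (hr : -1 < r) (hpc : p ≤ c) :
    IntervalIntegrable (fun x => |x - c| ^ r) volume p c := by
  have h0 : IntervalIntegrable (fun x : ℝ => (c - x) ^ r) volume p c := by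
    simpa using ((intervalIntegral.intervalIntegrable_rpow' (a := 0) (b := c - p) hr).comp_sub_left c).symm
  rw [intervalIntegrable_iff] at h0 ⊢
  refine h0.congr_fun ?_ measurableSet_uIoc
  intro x hx
  rw [Set.uIoc_of_le hpc] at hx
  simp only []
  rw [abs_of_nonpos (by linarith [hx.2] : x - c ≤ 0), neg_sub]

lemma sing_int {p q c r : ℝ} (hr : -1 < r) (hc : c ∈ Set.Icc p q) :
    IntervalIntegrable (fun x => |x - c| ^ r) volume p q :=
  (sing_int_left hr hc.1).trans (sing_int_right hr hc.2)

lemma sing_integral_le {p q c α : ℝ} (hα : 0 < α) (hc : c ∈ Set.Icc p q) :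
    (∫ x in p..q, |x - c| ^ (α - 1)) ≤ 2 * (q - p) ^ α / α := by
  have hr : (-1:ℝ) < α - 1 := by linarith
  have hsplit := intervalIntegral.integral_add_adjacent_intervals
    (sing_int_left hr hc.1) (sing_int_right hr hc.2)
  have h1 : (∫ x in p..c, |x - c| ^ (α - 1)) = (c - p) ^ α / α := by
    have e1 : (∫ x in p..c, |x - c| ^ (α - 1)) = ∫ x in p..c, (c - x) ^ (α - 1) := by
      refine intervalIntegral.integral_congr fun x hx => ?_
      rw [Set.uIcc_of_le hc.1] at hx
      rw [abs_of_nonpos (by linarith [hx.2] : x - c ≤ 0), neg_sub]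
    rw [e1, intervalIntegral.integral_comp_sub_left (fun x : ℝ => x ^ (α - 1)) c, sub_self,
      integral_rpow (Or.inl hr)]
    rw [sub_add_cancel, Real.zero_rpow hα.ne']
    ring
  have h2 : (∫ x in c..q, |x - c| ^ (α - 1)) = (q - c) ^ α / α := by
    have e1 : (∫ x in c..q, |x - c| ^ (α - 1)) = ∫ x in c..q, (x - c) ^ (α - 1) := by
      refine intervalIntegral.integral_congr fun x hx => ?_
      rw [Set.uIcc_of_le hc.2] at hx
      rw [abs_of_nonneg (by linarith [hx.1] : (0:ℝ) ≤ x - c)]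
    rw [e1, intervalIntegral.integral_comp_sub_right (fun x : ℝ => x ^ (α - 1)) c, sub_self,
      integral_rpow (Or.inl hr)]
    rw [sub_add_cancel, Real.zero_rpow hα.ne']
    ring
  have hb1 : (c - p) ^ α ≤ (q - p) ^ α :=
    Real.rpow_le_rpow (by linarith [hc.1]) (by linarith [hc.2]) hα.le
  have hb2 : (q - c) ^ α ≤ (q - p) ^ α :=
    Real.rpow_le_rpow (by linarith [hc.2]) (by linarith [hc.1]) hα.le
  rw [← hsplit, h1, h2]
  have : (c - p) ^ α / α + (q - c) ^ α / α ≤ (q - p) ^ α / α + (q - p) ^ α / α := by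
    gcongr
  have h3 : 2 * (q - p) ^ α / α = (q - p) ^ α / α + (q - p) ^ α / α := by ring
  linarith

end Helpers

set_option maxHeartbeats 1000000 in
/-- Corollary 2.8: the term I₂ is of order κ². -/
theorem stmt_7
    (a a₀ b₀ b l₀ κ₀ α : ℝ)
    (ha : a < a₀) (hab : a₀ < b₀) (hb : b₀ < b)
    (hl₀ : l₀ ∈ Ioo a₀ b₀) (hκ₀ : 0 < κ₀) (hα : α ∈ Ioc (0:ℝ) 1)
    (lam : ℝ → ℝ) (F F' : ℝ → ℝ → ℂ)
    -- (H0)(a)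
    (hH0a : Tendsto lam (𝓝 0) (𝓝 l₀))
    -- (H0)(b)
    (hH0b : ∃ M : ℝ, ∀ l ∈ Icc a b, ∀ k ∈ Icc (-κ₀) κ₀, ‖F l k‖ ≤ M)
    (hH0c : ContinuousWithinAt (fun p : ℝ × ℝ => F p.1 p.2)
      (Icc a b ×ˢ Icc (-κ₀) κ₀) (l₀, 0))
    -- (H1): F(·,κ) is C¹ on [a,b] with derivative F'
    (hH1 : ∀ k ∈ Icc (-κ₀) κ₀, ∀ l ∈ Icc a b,
      HasDerivWithinAt (fun x => F x k) (F' l k) (Icc a b) l)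
    (hH1cont : ∀ k ∈ Icc (-κ₀) κ₀, ContinuousOn (fun l => F' l k) (Icc a b))
    -- (H1)(a): F' bounded
    (hH1a : ∃ M' : ℝ, ∀ l ∈ Icc a b, ∀ k ∈ Icc (-κ₀) κ₀, ‖F' l k‖ ≤ M')
    -- (H1)(b): F' is α-Hölder on [a₀,b₀] uniformly in κ
    (hH1b : ∃ L : ℝ, ∀ k ∈ Icc (-κ₀) κ₀, ∀ l₁ ∈ Icc a₀ b₀, ∀ l₂ ∈ Icc a₀ b₀,
      ‖F' l₁ k - F' l₂ k‖ ≤ L * |l₁ - l₂| ^ α)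
    -- (H2): inf of Im F on [a₀,b₀] is positive
    (hH2 : ∀ k ∈ Icc (-κ₀) κ₀, ∃ c > 0, ∀ l ∈ Icc a₀ b₀, c ≤ (F l k).im)
    -- choice of δ₁ and κ₁
    (δ₁ κ₁ : ℝ)
    (hδ₁ : 0 < δ₁) (hδ₁' : δ₁ < min (l₀ - a₀) (min (b₀ - l₀) 1))
    (hκ₁ : 0 < κ₁) (hκ₁' : κ₁ ≤ κ₀)
    (hmap : ∀ k : ℝ, |k| ≤ κ₁ → ∀ l ∈ Icc a₀ b₀,
      lam k - k ^ 2 * (F l k).re ∈ Icc (a₀ + δ₁) (b₀ - δ₁))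
    (hcontr : ∀ l ∈ Icc a₀ b₀, ∀ k ∈ Icc (-κ₀) κ₀, κ₁ ^ 2 * ‖F' l k‖ ≤ 1 - δ₁)
    -- D(λ,κ) ≠ 0 on [a,b] for 0 < |κ| ≤ κ₁ (so that G is well defined)
    (hDne : ∀ k : ℝ, k ≠ 0 → |k| ≤ κ₁ → ∀ l ∈ Icc a b,
      (lam k : ℂ) - (l : ℂ) - (k : ℂ) ^ 2 * F l k ≠ 0)
    -- λ_κ^∞ : the unique solution in [a₀,b₀] of λ = λ_κ − κ² Re F(λ,κ)
    (lamInf : ℝ → ℝ)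
    (hfix : ∀ k : ℝ, k ≠ 0 → |k| ≤ κ₁ → lamInf k ∈ Icc a₀ b₀ ∧
      lamInf k = lam k - k ^ 2 * (F (lamInf k) k).re ∧
      (∀ l' ∈ Icc a₀ b₀, l' = lam k - k ^ 2 * (F l' k).re → l' = lamInf k))
    :
    ∀ G G1 : ℝ → ℝ → ℂ,
      (∀ l k : ℝ, G l k = ((lam k : ℂ) - l - (k : ℂ) ^ 2 * F l k)⁻¹) →
      (∀ l k : ℝ, G1 l k = ((lam k : ℂ) - l - (k : ℂ) ^ 2 * F (lamInf k) k
          - (k : ℂ) ^ 2 * F' (lamInf k) k * ((l : ℂ) - (lamInf k : ℂ)))⁻¹) →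
      ∃ C > 0, ∃ κ₂ : ℝ, 0 < κ₂ ∧ κ₂ ≤ κ₁ ∧ ∀ t : ℝ, ∀ k : ℝ, k ≠ 0 → |k| ≤ κ₂ →
        ‖(1 / (Real.pi : ℂ)) * ∫ l in a₀..b₀,
            Complex.exp (-Complex.I * l * t) * (((G l k - G1 l k).im : ℝ) : ℂ)‖
          ≤ (∫ l in a₀..b₀, ‖G l k - G1 l k‖) ∧
        (∫ l in a₀..b₀, ‖G l k - G1 l k‖) ≤ C * k ^ 2 := by
  intro G G1 hG hG1
  obtain ⟨L, hL⟩ := hH1b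
  have hα0 : 0 < α := hα.1
  set L' : ℝ := max L 0 + 1 with hL'def
  have hL'pos : 0 < L' := by positivity
  have hL' : ∀ k ∈ Icc (-κ₀) κ₀, ∀ l₁ ∈ Icc a₀ b₀, ∀ l₂ ∈ Icc a₀ b₀,
      ‖F' l₁ k - F' l₂ k‖ ≤ L' * |l₁ - l₂| ^ α := by
    intro k hk l₁ h₁ l₂ h₂
    refine (hL k hk l₁ h₁ l₂ h₂).trans ?_
    have h3 : (0:ℝ) ≤ |l₁ - l₂| ^ α := Real.rpow_nonneg (abs_nonneg _) _
    have h4 : L ≤ L' := by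
      have := le_max_left L 0; simp only [hL'def]; linarith
    exact mul_le_mul_of_nonneg_right h4 h3
  set K : ℝ := L' / δ₁ ^ 2 with hKdef
  have hKpos : 0 < K := by positivity
  set C : ℝ := K * (2 * (b₀ - a₀) ^ α / α) with hCdef
  have hCpos : 0 < C := by
    have : (0:ℝ) < (b₀ - a₀) ^ α := Real.rpow_pos_of_pos (by linarith) _
    positivity
  refine ⟨C, hCpos, κ₁, hκ₁, le_refl _, ?_⟩
  intro t k hk hkκ
  have hkabs : |k| ≤ κ₁ := hkκ
  have hkκ₀ : k ∈ Icc (-κ₀) κ₀ := abs_le.mp (hkabs.trans hκ₁')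
  obtain ⟨hcmem, hceq, -⟩ := hfix k hk hkabs
  set c : ℝ := lamInf k with hc
  have hIccsub : Icc a₀ b₀ ⊆ Icc a b := Icc_subset_Icc ha.le hb.le
  have hk2 : k ^ 2 ≤ κ₁ ^ 2 := by
    have := sq_abs k
    nlinarith [abs_nonneg k]
  have hk2pos : 0 < k ^ 2 := by positivity
  set D : ℝ → ℂ := fun l => (lam k : ℂ) - l - (k:ℂ)^2 * F l k with hD
  set D1 : ℝ → ℂ := fun l => (lam k : ℂ) - l - (k:ℂ)^2 * F c k
      - (k:ℂ)^2 * F' c k * ((l:ℂ) - (c:ℂ)) with hD1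
  have hnormk2 : ‖((k:ℂ))^2‖ = k ^ 2 := by
    rw [norm_pow, Complex.norm_real, Real.norm_eq_abs, sq_abs]
  -- bound on k² F'
  have hF'bd : ∀ l ∈ Icc a₀ b₀, ‖(k:ℂ)^2 * F' l k‖ ≤ 1 - δ₁ := by
    intro l hl
    rw [norm_mul, hnormk2]
    calc k ^ 2 * ‖F' l k‖ ≤ κ₁ ^ 2 * ‖F' l k‖ :=
          mul_le_mul_of_nonneg_right hk2 (norm_nonneg _)
      _ ≤ 1 - δ₁ := hcontr l hl k hkκ₀
  -- Lipschitz bound for k² F(·,k) on [a₀,b₀]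
  have hLip : ∀ l ∈ Icc a₀ b₀, ‖(k:ℂ)^2 * F l k - (k:ℂ)^2 * F c k‖ ≤ (1 - δ₁) * |l - c| := by
    intro l hl
    have := (convex_Icc a₀ b₀).norm_image_sub_le_of_norm_hasDerivWithin_le
      (f := fun x : ℝ => (k:ℂ)^2 * F x k) (f' := fun x : ℝ => (k:ℂ)^2 * F' x k)
      (fun x hx => ((hH1 k hkκ₀ x (hIccsub hx)).mono hIccsub).const_mul ((k:ℂ)^2))
      hF'bd hcmem hl
    simpa [Real.norm_eq_abs] using this
  -- real parts
  have hReD : ∀ l : ℝ, (D l).re = lam k - l - k ^ 2 * (F l k).re := by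
    intro l
    simp only [hD, Complex.sub_re, Complex.sub_im, Complex.mul_re, Complex.mul_im,
      Complex.ofReal_re, Complex.ofReal_im, pow_two]
    ring
  have hceq' : lam k = c + k ^ 2 * (F c k).re := by linarith [hceq]
  -- lower bound on ‖D l‖
  have hDlb : ∀ l ∈ Icc a₀ b₀, δ₁ * |l - c| ≤ ‖D l‖ := by
    intro l hl
    have h1 : |(D l).re| ≤ ‖D l‖ := Complex.abs_re_le_norm _
    have h2 : (D l).re = (c - l) - (k ^ 2 * (F l k).re - k ^ 2 * (F c k).re) := by
      rw [hReD l, hceq']; ring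
    have h3 : |k ^ 2 * (F l k).re - k ^ 2 * (F c k).re| ≤ (1 - δ₁) * |l - c| := by
      refine le_trans ?_ (hLip l hl)
      have e2 : k ^ 2 * (F l k).re - k ^ 2 * (F c k).re
          = ((k:ℂ)^2 * F l k - (k:ℂ)^2 * F c k).re := by
        simp only [Complex.sub_re, Complex.sub_im, Complex.mul_re, Complex.mul_im, Complex.ofReal_re, Complex.ofReal_im, pow_two]
        ring
      rw [e2]
      exact Complex.abs_re_le_norm _
    have h4 : |c - l| - |k ^ 2 * (F l k).re - k ^ 2 * (F c k).re| ≤ |(D l).re| := by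
      rw [h2]; exact abs_sub_abs_le_abs_sub _ _
    have h5 : |c - l| = |l - c| := abs_sub_comm _ _
    nlinarith [abs_nonneg (l - c)]
  -- lower bound on ‖D1 l‖
  have hReD1 : ∀ l : ℝ, (D1 l).re = -(l - c) * (1 + k ^ 2 * (F' c k).re) := by
    intro l
    simp only [hD1, Complex.sub_re, Complex.sub_im, Complex.mul_re, Complex.mul_im,
      Complex.ofReal_re, Complex.ofReal_im, pow_two]
    rw [hceq']
    ring
  have hD1lb : ∀ l ∈ Icc a₀ b₀, δ₁ * |l - c| ≤ ‖D1 l‖ := by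
    intro l hl
    have h1 : |(D1 l).re| ≤ ‖D1 l‖ := Complex.abs_re_le_norm _
    have h2 : |k ^ 2 * (F' c k).re| ≤ 1 - δ₁ := by
      refine le_trans ?_ (hF'bd c hcmem)
      have e2 : k ^ 2 * (F' c k).re = ((k:ℂ)^2 * F' c k).re := by
        simp only [Complex.sub_re, Complex.sub_im, Complex.mul_re, Complex.mul_im, Complex.ofReal_re, Complex.ofReal_im, pow_two]
        ring
      rw [e2]; exact Complex.abs_re_le_norm _
    have h3 : δ₁ ≤ 1 + k ^ 2 * (F' c k).re := by
      have := abs_le.mp h2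
      linarith [this.1]
    have h4 : |(D1 l).re| = |l - c| * |1 + k ^ 2 * (F' c k).re| := by
      rw [hReD1 l, abs_mul, abs_neg]
    have h5 : δ₁ ≤ |1 + k ^ 2 * (F' c k).re| := le_trans h3 (le_abs_self _)
    calc δ₁ * |l - c| = |l - c| * δ₁ := by ring
      _ ≤ |l - c| * |1 + k ^ 2 * (F' c k).re| :=
          mul_le_mul_of_nonneg_left h5 (abs_nonneg _)
      _ = |(D1 l).re| := h4.symm
      _ ≤ ‖D1 l‖ := h1
  -- difference bound
  have hdiffb : ∀ l ∈ Icc a₀ b₀, ‖D l - D1 l‖ ≤ k ^ 2 * (L' * |l - c| ^ α * |l - c|) := by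
    intro l hl
    set g : ℝ → ℂ := fun x => F x k - F' c k * (x:ℂ) with hg
    have hsub : uIcc c l ⊆ Icc a₀ b₀ := uIcc_subset_Icc hcmem hl
    have hderiv : ∀ x ∈ uIcc c l, HasDerivWithinAt g (F' x k - F' c k) (uIcc c l) x := by
      intro x hx
      have h1 : HasDerivWithinAt (fun x : ℝ => F x k) (F' x k) (uIcc c l) x :=
        (hH1 k hkκ₀ x (hIccsub (hsub hx))).mono (hsub.trans hIccsub)
      have h2 : HasDerivWithinAt (fun x : ℝ => F' c k * (x:ℂ)) (F' c k) (uIcc c l) x := by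
        have h3 : HasDerivAt (fun x : ℝ => x • (F' c k)) ((1:ℝ) • F' c k) x :=
          (hasDerivAt_id x).smul_const (F' c k)
        have h4 : HasDerivAt (fun x : ℝ => F' c k * (x:ℂ)) (F' c k) x := by
          simpa [Complex.real_smul, mul_comm] using h3
        exact h4.hasDerivWithinAt
      exact h1.sub h2
    have hbound : ∀ x ∈ uIcc c l, ‖F' x k - F' c k‖ ≤ L' * |l - c| ^ α := by
      intro x hx
      refine (hL' k hkκ₀ x (hsub hx) c hcmem).trans ?_
      have hxc : |x - c| ≤ |l - c| := by
        rcases le_total c l with h | h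
        · rw [uIcc_of_le h] at hx
          rw [abs_of_nonneg (by linarith [hx.1] : (0:ℝ) ≤ x - c),
            abs_of_nonneg (by linarith : (0:ℝ) ≤ l - c)]
          linarith [hx.2]
        · rw [uIcc_of_ge h] at hx
          rw [abs_of_nonpos (by linarith [hx.2] : x - c ≤ 0),
            abs_of_nonpos (by linarith : l - c ≤ 0)]
          linarith [hx.1]
      exact mul_le_mul_of_nonneg_left
        (Real.rpow_le_rpow (abs_nonneg _) hxc hα0.le) hL'pos.le
    have hMVT := (convex_uIcc c l).norm_image_sub_le_of_norm_hasDerivWithin_le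
      hderiv hbound (left_mem_uIcc) (right_mem_uIcc)
    have hDsub : D l - D1 l = -((k:ℂ)^2) * (g l - g c) := by
      simp only [hD, hD1, hg]; ring
    rw [hDsub, norm_mul, norm_neg, hnormk2]
    refine mul_le_mul_of_nonneg_left ?_ hk2pos.le
    calc ‖g l - g c‖ ≤ L' * |l - c| ^ α * ‖l - c‖ := hMVT
      _ = L' * |l - c| ^ α * |l - c| := by rw [Real.norm_eq_abs]
  -- nonvanishing
  have hDne' : ∀ l ∈ Icc a₀ b₀, D l ≠ 0 := fun l hl => hDne k hk hkabs l (hIccsub hl)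
  have hD1ne : ∀ l ∈ Icc a₀ b₀, D1 l ≠ 0 := by
    intro l hl
    rcases eq_or_ne l c with hlc | hlc
    · intro h0
      obtain ⟨cκ, hcκpos, hcκ⟩ := hH2 k hkκ₀
      have him : (D1 c).im = -(k ^ 2 * (F c k).im) := by
        simp only [hD1, Complex.sub_re, Complex.sub_im, Complex.mul_re, Complex.mul_im,
          Complex.ofReal_re, Complex.ofReal_im, pow_two]
        ring
      rw [hlc] at h0
      rw [h0] at him
      simp only [Complex.zero_im] at him
      have h1 : cκ ≤ (F c k).im := hcκ c hcmem
      nlinarith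
    · intro h0
      have h1 := hD1lb l hl
      rw [h0, norm_zero] at h1
      have h2 : (0:ℝ) < |l - c| := abs_pos.mpr (sub_ne_zero.mpr hlc)
      nlinarith
  -- G - G1 as quotient
  have hGG1 : ∀ l ∈ Icc a₀ b₀, G l k - G1 l k = (D1 l - D l) / (D l * D1 l) := by
    intro l hl
    rw [hG l k, hG1 l k]
    exact inv_sub_inv (hDne' l hl) (hD1ne l hl)
  -- continuity
  have hFcont : ContinuousOn (fun l => F l k) (Icc a b) :=
    fun x hx => ((hH1 k hkκ₀ x hx).differentiableWithinAt).continuousWithinAt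
  have hDcont : ContinuousOn D (Icc a₀ b₀) := by
    have : ContinuousOn D (Icc a b) :=
      (continuousOn_const.sub (Complex.continuous_ofReal.continuousOn)).sub
        (continuousOn_const.mul hFcont)
    exact this.mono hIccsub
  have hD1cont : ContinuousOn D1 (Icc a₀ b₀) := by
    simp only [hD1]
    exact ((continuousOn_const.sub Complex.continuous_ofReal.continuousOn).sub
      continuousOn_const).sub (continuousOn_const.mul
      (Complex.continuous_ofReal.continuousOn.sub continuousOn_const))
  have hGG1cont : ContinuousOn (fun l => G l k - G1 l k) (Icc a₀ b₀) := by
    have h1 : ContinuousOn (fun l => (D l)⁻¹ - (D1 l)⁻¹) (Icc a₀ b₀) :=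
      (hDcont.inv₀ hDne').sub (hD1cont.inv₀ hD1ne)
    refine h1.congr fun l hl => ?_
    rw [hG l k, hG1 l k]
  -- integrability of ‖G - G1‖
  have hInt1 : IntervalIntegrable (fun l => ‖G l k - G1 l k‖) volume a₀ b₀ := by
    apply ContinuousOn.intervalIntegrable
    rw [uIcc_of_le hab.le]
    exact hGG1cont.norm
  have hr : (-1:ℝ) < α - 1 := by linarith
  have hInt2 : IntervalIntegrable (fun l => k ^ 2 * K * |l - c| ^ (α - 1)) volume a₀ b₀ :=
    (sing_int hr hcmem).const_mul _
  -- pointwise bound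
  have hptbd : ∀ l ∈ Icc a₀ b₀, l ≠ c → ‖G l k - G1 l k‖ ≤ k ^ 2 * K * |l - c| ^ (α - 1) := by
    intro l hl hlc
    have hnum0 := hdiffb l hl
    have h1 := hDlb l hl
    have h2 := hD1lb l hl
    rw [hGG1 l hl, norm_div, norm_mul]
    set x : ℝ := |l - c| with hx
    have hxpos : 0 < x := abs_pos.mpr (sub_ne_zero.mpr hlc)
    clear_value x
    have hnum : ‖D1 l - D l‖ ≤ k ^ 2 * (L' * x ^ α * x) := by
      rw [norm_sub_rev]; exact hnum0
    have hden : δ₁ * x * (δ₁ * x) ≤ ‖D l‖ * ‖D1 l‖ := by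
      have h3 : (0:ℝ) ≤ δ₁ * x := by positivity
      exact mul_le_mul h1 h2 h3 (norm_nonneg _)
    have hdenpos : (0:ℝ) < δ₁ * x * (δ₁ * x) := by positivity
    calc ‖D1 l - D l‖ / (‖D l‖ * ‖D1 l‖)
        ≤ (k ^ 2 * (L' * x ^ α * x)) / (δ₁ * x * (δ₁ * x)) :=
          div_le_div₀ (by positivity) hnum hdenpos hden
      _ = k ^ 2 * K * x ^ (α - 1) := by
          rw [Real.rpow_sub_one hxpos.ne']
          rw [hKdef]
          field_simp
  -- the L¹ bound
  have hmain : (∫ l in a₀..b₀, ‖G l k - G1 l k‖) ≤ C * k ^ 2 := by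
    have hmono : (∫ l in a₀..b₀, ‖G l k - G1 l k‖)
        ≤ ∫ l in a₀..b₀, k ^ 2 * K * |l - c| ^ (α - 1) := by
      refine intervalIntegral.integral_mono_ae_restrict hab.le hInt1 hInt2 ?_
      have hne : ∀ᵐ x : ℝ ∂(volume.restrict (Icc a₀ b₀)), x ≠ c := by
        refine ae_restrict_of_ae ?_
        rw [ae_iff]
        simp only [not_not]
        convert Real.volume_singleton (a := c) using 2
        ext x; simp
      filter_upwards [hne, ae_restrict_mem measurableSet_Icc] with x hx1 hx2
      exact hptbd x hx2 hx1
    have hcalc : (∫ l in a₀..b₀, k ^ 2 * K * |l - c| ^ (α - 1))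
        ≤ C * k ^ 2 := by
      rw [intervalIntegral.integral_const_mul]
      have := sing_integral_le hα0 hcmem
      calc k ^ 2 * K * ∫ l in a₀..b₀, |l - c| ^ (α - 1)
          ≤ k ^ 2 * K * (2 * (b₀ - a₀) ^ α / α) :=
            mul_le_mul_of_nonneg_left this (by positivity)
        _ = C * k ^ 2 := by rw [hCdef]; ring
    linarith
  refine ⟨?_, hmain⟩
  -- first inequality
  have hexp : ∀ l : ℝ, ‖Complex.exp (-Complex.I * l * t)‖ = 1 := by
    intro l
    rw [Complex.norm_exp]
    norm_num [Complex.mul_re, Complex.mul_im]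
  have hnormint : (fun l : ℝ => ‖Complex.exp (-Complex.I * l * t)
      * (((G l k - G1 l k).im : ℝ) : ℂ)‖) = fun l : ℝ => |(G l k - G1 l k).im| := by
    funext l
    rw [norm_mul, hexp l, one_mul, Complex.norm_real, Real.norm_eq_abs]
  have hIntIm : IntervalIntegrable (fun l => |(G l k - G1 l k).im|) volume a₀ b₀ := by
    apply ContinuousOn.intervalIntegrable
    rw [uIcc_of_le hab.le]
    exact ((Complex.continuous_im.comp_continuousOn hGG1cont)).abs
  have hImle : (∫ l in a₀..b₀, |(G l k - G1 l k).im|)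
      ≤ ∫ l in a₀..b₀, ‖G l k - G1 l k‖ := by
    refine intervalIntegral.integral_mono_on hab.le hIntIm hInt1 fun x _ => ?_
    exact Complex.abs_im_le_norm _
  have hπ : ‖(1 / (Real.pi : ℂ))‖ ≤ 1 := by
    rw [norm_div, norm_one, Complex.norm_real, Real.norm_eq_abs,
      abs_of_pos Real.pi_pos]
    rw [div_le_one Real.pi_pos]
    linarith [Real.pi_gt_three]
  calc ‖(1 / (Real.pi : ℂ)) * ∫ l in a₀..b₀,
          Complex.exp (-Complex.I * l * t) * (((G l k - G1 l k).im : ℝ) : ℂ)‖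
      = ‖(1 / (Real.pi : ℂ))‖ * ‖∫ l in a₀..b₀,
          Complex.exp (-Complex.I * l * t) * (((G l k - G1 l k).im : ℝ) : ℂ)‖ := norm_mul _ _
    _ ≤ 1 * ‖∫ l in a₀..b₀,
          Complex.exp (-Complex.I * l * t) * (((G l k - G1 l k).im : ℝ) : ℂ)‖ :=
        mul_le_mul_of_nonneg_right hπ (norm_nonneg _)
    _ = ‖∫ l in a₀..b₀,
          Complex.exp (-Complex.I * l * t) * (((G l k - G1 l k).im : ℝ) : ℂ)‖ := one_mul _
    _ ≤ ∫ l in a₀..b₀, ‖Complex.exp (-Complex.I * l * t)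
          * (((G l k - G1 l k).im : ℝ) : ℂ)‖ :=
        intervalIntegral.norm_integral_le_integral_norm hab.le
    _ = ∫ l in a₀..b₀, |(G l k - G1 l k).im| := by rw [hnormint]
    _ ≤ ∫ l in a₀..b₀, ‖G l k - G1 l k‖ := hImle
end

section
/- There exists C > 0 such that for all λ ∈ [a₀,b₀] and 0 < |κ| ≤ κ₁: |∂_λG(λ,κ) − ∂_λG₁(λ,κ)| ≤ Cκ²·|Ĝ(λ,κ)|²·|λ − λ_κ^∞|^{α}. -/
open MeasureTheory Filter Set Topology

lemma mvt_aux {E : Type*} [NormedAddCommGroup E] [NormedSpace ℝ E]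
    {f g : ℝ → E} {u v : Set ℝ} (huv : u ⊆ v) (hu : Convex ℝ u)
    (hf : ∀ x ∈ v, HasDerivWithinAt f (g x) v x)
    {C : ℝ} (hb : ∀ x ∈ u, ‖g x‖ ≤ C) {x y : ℝ} (hx : x ∈ u) (hy : y ∈ u) :
    ‖f y - f x‖ ≤ C * |y - x| := by
  have := Convex.norm_image_sub_le_of_norm_hasDerivWithin_le
    (fun z hz => (hf z (huv hz)).mono huv) hb hu hx hy
  simpa [Real.norm_eq_abs] using this

lemma key_aux (p q d d1 k2 : ℂ) (hd : d ≠ 0) (hd1 : d1 ≠ 0) :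
    (1 + k2*p)/d^2 - (1 + k2*q)/d1^2
      = k2*(p - q)*(d⁻¹)^2 + (1 + k2*q)*(d1 - d)*((d⁻¹)^2*d1⁻¹ + d⁻¹*(d1⁻¹)^2) := by
  have hu : d * d⁻¹ = 1 := mul_inv_cancel₀ hd
  have hv : d1 * d1⁻¹ = 1 := mul_inv_cancel₀ hd1
  have h2 : (1 + k2*p)/d^2 = (1+k2*p)*(d⁻¹)^2 := by rw [div_eq_mul_inv, inv_pow]
  have h3 : (1 + k2*q)/d1^2 = (1+k2*q)*(d1⁻¹)^2 := by rw [div_eq_mul_inv, inv_pow]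
  rw [h2, h3]
  linear_combination ((1+k2*q)*(d⁻¹*d1⁻¹+(d1⁻¹)^2)) * hu - ((1+k2*q)*((d⁻¹)^2+d⁻¹*d1⁻¹)) * hv

set_option maxHeartbeats 1000000 in
/-- Lemma 2.9: pointwise bound on ∂_λG − ∂_λG₁. -/
theorem stmt_8
    (a a₀ b₀ b l₀ κ₀ α : ℝ)
    (ha : a < a₀) (hab : a₀ < b₀) (hb : b₀ < b)
    (hl₀ : l₀ ∈ Ioo a₀ b₀) (hκ₀ : 0 < κ₀) (hα : α ∈ Ioc (0:ℝ) 1)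
    (lam : ℝ → ℝ) (F F' : ℝ → ℝ → ℂ)
    -- (H0)(a)
    (hH0a : Tendsto lam (𝓝 0) (𝓝 l₀))
    -- (H0)(b)
    (hH0b : ∃ M : ℝ, ∀ l ∈ Icc a b, ∀ k ∈ Icc (-κ₀) κ₀, ‖F l k‖ ≤ M)
    (hH0c : ContinuousWithinAt (fun p : ℝ × ℝ => F p.1 p.2)
      (Icc a b ×ˢ Icc (-κ₀) κ₀) (l₀, 0))
    -- (H1): F(·,κ) is C¹ on [a,b] with derivative F'
    (hH1 : ∀ k ∈ Icc (-κ₀) κ₀, ∀ l ∈ Icc a b,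
      HasDerivWithinAt (fun x => F x k) (F' l k) (Icc a b) l)
    (hH1cont : ∀ k ∈ Icc (-κ₀) κ₀, ContinuousOn (fun l => F' l k) (Icc a b))
    -- (H1)(a): F' bounded
    (hH1a : ∃ M' : ℝ, ∀ l ∈ Icc a b, ∀ k ∈ Icc (-κ₀) κ₀, ‖F' l k‖ ≤ M')
    -- (H1)(b): F' is α-Hölder on [a₀,b₀] uniformly in κ
    (hH1b : ∃ L : ℝ, ∀ k ∈ Icc (-κ₀) κ₀, ∀ l₁ ∈ Icc a₀ b₀, ∀ l₂ ∈ Icc a₀ b₀,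
      ‖F' l₁ k - F' l₂ k‖ ≤ L * |l₁ - l₂| ^ α)
    -- (H2): inf of Im F on [a₀,b₀] is positive
    (hH2 : ∀ k ∈ Icc (-κ₀) κ₀, ∃ c > 0, ∀ l ∈ Icc a₀ b₀, c ≤ (F l k).im)
    -- choice of δ₁ and κ₁
    (δ₁ κ₁ : ℝ)
    (hδ₁ : 0 < δ₁) (hδ₁' : δ₁ < min (l₀ - a₀) (min (b₀ - l₀) 1))
    (hκ₁ : 0 < κ₁) (hκ₁' : κ₁ ≤ κ₀)
    (hmap : ∀ k : ℝ, |k| ≤ κ₁ → ∀ l ∈ Icc a₀ b₀,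
      lam k - k ^ 2 * (F l k).re ∈ Icc (a₀ + δ₁) (b₀ - δ₁))
    (hcontr : ∀ l ∈ Icc a₀ b₀, ∀ k ∈ Icc (-κ₀) κ₀, κ₁ ^ 2 * ‖F' l k‖ ≤ 1 - δ₁)
    -- D(λ,κ) ≠ 0 on [a,b] for 0 < |κ| ≤ κ₁ (so that G is well defined)
    (hDne : ∀ k : ℝ, k ≠ 0 → |k| ≤ κ₁ → ∀ l ∈ Icc a b,
      (lam k : ℂ) - (l : ℂ) - (k : ℂ) ^ 2 * F l k ≠ 0)
    -- λ_κ^∞ : the unique solution in [a₀,b₀] of λ = λ_κ − κ² Re F(λ,κ)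
    (lamInf : ℝ → ℝ)
    (hfix : ∀ k : ℝ, k ≠ 0 → |k| ≤ κ₁ → lamInf k ∈ Icc a₀ b₀ ∧
      lamInf k = lam k - k ^ 2 * (F (lamInf k) k).re ∧
      (∀ l' ∈ Icc a₀ b₀, l' = lam k - k ^ 2 * (F l' k).re → l' = lamInf k))
    :
    ∀ G G1 Ghat : ℝ → ℝ → ℂ,
      (∀ l k : ℝ, G l k = ((lam k : ℂ) - l - (k : ℂ) ^ 2 * F l k)⁻¹) →
      (∀ l k : ℝ, G1 l k = ((lam k : ℂ) - l - (k : ℂ) ^ 2 * F (lamInf k) k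
          - (k : ℂ) ^ 2 * F' (lamInf k) k * ((l : ℂ) - (lamInf k : ℂ)))⁻¹) →
      (∀ l k : ℝ, Ghat l k = ((lamInf k : ℂ) - l
          - Complex.I * (k : ℂ) ^ 2 * ((F (lamInf k) k).im : ℂ))⁻¹) →
      ∀ Gd G1d : ℝ → ℝ → ℂ,
        (∀ k : ℝ, k ≠ 0 → |k| ≤ κ₁ → ∀ l ∈ Icc a₀ b₀,
          HasDerivWithinAt (fun x => G x k) (Gd l k) (Icc a b) l) →
        (∀ k : ℝ, k ≠ 0 → |k| ≤ κ₁ → ∀ l ∈ Icc a₀ b₀,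
          HasDerivWithinAt (fun x => G1 x k) (G1d l k) (Icc a b) l) →
        ∃ C > 0, ∀ l ∈ Icc a₀ b₀, ∀ k : ℝ, k ≠ 0 → |k| ≤ κ₁ →
          ‖Gd l k - G1d l k‖ ≤ C * k ^ 2 * ‖Ghat l k‖ ^ 2 * |l - lamInf k| ^ α := by
  intro G G1 Ghat hG hG1 hGhat Gd G1d hGd hG1d
  obtain ⟨M', hM'⟩ := hH1a
  obtain ⟨L, hL⟩ := hH1b
  have hab' : a < b := ha.trans (hab.trans hb)
  have hM'0 : 0 ≤ M' :=
    le_trans (norm_nonneg _) (hM' a ⟨le_refl a, hab'.le⟩ 0 ⟨by linarith, hκ₀.le⟩)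
  have h0mem : (0:ℝ) ∈ Icc (-κ₀) κ₀ := ⟨by linarith, hκ₀.le⟩
  have ha₀m : a₀ ∈ Icc a₀ b₀ := ⟨le_refl _, hab.le⟩
  have hb₀m : b₀ ∈ Icc a₀ b₀ := ⟨hab.le, le_refl _⟩
  have hL0 : 0 ≤ L := by
    have h1 := le_trans (norm_nonneg _) (hL 0 h0mem a₀ ha₀m b₀ hb₀m)
    have h2 : (0:ℝ) < |a₀ - b₀| ^ α := by
      apply Real.rpow_pos_of_pos
      rw [abs_sub_comm, abs_of_pos (by linarith : (0:ℝ) < b₀ - a₀)]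
      linarith
    nlinarith
  have hδ₁1 : δ₁ < 1 := lt_of_lt_of_le hδ₁' (le_trans (min_le_right _ _) (min_le_right _ _))
  have h1κM : (0:ℝ) ≤ 1 + κ₁^2*M' := by nlinarith [mul_nonneg (sq_nonneg κ₁) hM'0]
  set C₁ : ℝ := (1 + κ₁^2*M')/δ₁ + 1 with hC₁_def
  clear_value C₁
  have hC₁ : 0 < C₁ := by
    rw [hC₁_def]; exact add_pos_of_nonneg_of_pos (div_nonneg h1κM hδ₁.le) one_pos
  have hdivnn : (0:ℝ) ≤ C₁^2/δ₁ + C₁/δ₁^2 := by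
    apply add_nonneg
    · exact div_nonneg (sq_nonneg _) hδ₁.le
    · exact div_nonneg hC₁.le (sq_nonneg _)
  have hWnn : (0:ℝ) ≤ (1+κ₁^2*M')*L*(C₁^2/δ₁ + C₁/δ₁^2) :=
    mul_nonneg (mul_nonneg h1κM hL0) hdivnn
  refine ⟨C₁^2*L + (1+κ₁^2*M')*L*(C₁^2/δ₁ + C₁/δ₁^2) + 1, ?_, ?_⟩
  · have h1 : (0:ℝ) ≤ C₁^2*L := mul_nonneg (sq_nonneg _) hL0
    linarith
  intro l hl k hk0 hk1
  obtain ⟨hlf, hfixeq, -⟩ := hfix k hk0 hk1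
  set lf := lamInf k with hlf_def
  have hkk := abs_le.mp hk1
  have hkmem : k ∈ Icc (-κ₀) κ₀ := ⟨by linarith, by linarith⟩
  have hsubab : Icc a₀ b₀ ⊆ Icc a b := Icc_subset_Icc ha.le hb.le
  have hlab : l ∈ Icc a b := hsubab hl
  have hlfab : lf ∈ Icc a b := hsubab hlf
  have hk2pos : 0 < k^2 := by positivity
  have hk2le : k^2 ≤ κ₁^2 := by nlinarith [abs_nonneg k, sq_abs k]
  set d : ℂ := (lam k:ℂ) - (l:ℂ) - (k:ℂ)^2 * F l k with hd_def
  set d1 : ℂ := (lam k:ℂ) - (l:ℂ) - (k:ℂ)^2 * F lf k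
      - (k:ℂ)^2 * F' lf k * ((l:ℂ) - (lf:ℂ)) with hd1_def
  set dh : ℂ := (lf:ℂ) - (l:ℂ) - Complex.I * (k:ℂ)^2 * ((F lf k).im : ℂ) with hdh_def
  clear_value lf d d1 dh
  have habs_re : ∀ z:ℂ, |z.re| ≤ ‖z‖ := fun z => by
    exact Complex.abs_re_le_norm z
  have habs_im : ∀ z:ℂ, |z.im| ≤ ‖z‖ := fun z => by
    exact Complex.abs_im_le_norm z
  have habs_sum : ∀ z:ℂ, ‖z‖ ≤ |z.re| + |z.im| := fun z => by
    exact Complex.norm_le_abs_re_add_abs_im z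
  have hd0e : (lam k:ℂ) - (l:ℂ) - (k:ℂ)^2 * F l k ≠ 0 := hDne k hk0 hk1 l hlab
  have hd0 : d ≠ 0 := by rw [hd_def]; exact hd0e
  have hdre : d.re = lam k - l - k^2*(F l k).re := by
    rw [hd_def]
    simp [← Complex.ofReal_pow, Complex.mul_re]
  have hdim : d.im = -(k^2*(F l k).im) := by
    rw [hd_def]
    simp [← Complex.ofReal_pow, Complex.mul_im]
  have hdhre : dh.re = lf - l := by
    rw [hdh_def]
    simp [← Complex.ofReal_pow, Complex.mul_re, Complex.mul_im]
  have hdhim : dh.im = -(k^2*(F lf k).im) := by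
    rw [hdh_def]
    simp [← Complex.ofReal_pow, Complex.mul_re, Complex.mul_im]
  obtain ⟨c, hc, hcall⟩ := hH2 k hkmem
  have hIm_lf : 0 < (F lf k).im := lt_of_lt_of_le hc (hcall lf hlf)
  have hIm_l : 0 < (F l k).im := lt_of_lt_of_le hc (hcall l hl)
  have hdh_pos : 0 < ‖dh‖ := by
    have h1 := habs_im dh
    rw [hdhim, abs_neg, abs_of_pos (mul_pos hk2pos hIm_lf)] at h1
    linarith [mul_pos hk2pos hIm_lf]
  have hdh0 : dh ≠ 0 := norm_pos_iff.mp hdh_pos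
  have hε_le : |l - lf| ≤ ‖dh‖ := by
    have h1 := habs_re dh
    rw [hdhre, abs_sub_comm] at h1
    exact h1
  have hconv : Convex ℝ (uIcc lf l) := convex_uIcc _ _
  have husub : uIcc lf l ⊆ Icc a₀ b₀ := uIcc_subset_Icc hlf hl
  have husub' : uIcc lf l ⊆ Icc a b := husub.trans hsubab
  have hmem_lf : lf ∈ uIcc lf l := left_mem_uIcc
  have hmem_l : l ∈ uIcc lf l := right_mem_uIcc
  have hofReal : ∀ x : ℝ, HasDerivWithinAt (fun t : ℝ => (t:ℂ)) 1 (Icc a b) x :=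
    fun x => by
      have h := (Complex.ofRealCLM.hasDerivAt (x := x)).hasDerivWithinAt (s := Icc a b)
      simp only [Complex.ofRealCLM_apply, Complex.ofReal_one] at h
      exact h
  -- fact 1
  have hRe_lb : δ₁ * |l - lf| ≤ |d.re| := by
    have hf1 : ∀ x ∈ Icc a b, HasDerivWithinAt (fun t => lam k - k^2*(F t k).re)
        (-(k^2*(F' x k).re)) (Icc a b) x := by
      intro x hx
      have hre : HasDerivWithinAt (fun t => (F t k).re) ((F' x k).re) (Icc a b) x := by
        have := (Complex.reCLM.hasFDerivAt (x := F x k)).comp_hasDerivWithinAt x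
          (hH1 k hkmem x hx)
        exact this
      have h := (hasDerivWithinAt_const x (Icc a b) (lam k)).sub (hre.const_mul (k^2))
      simp only [zero_sub] at h
      exact h
    have hbd : ∀ x ∈ uIcc lf l, ‖-(k^2*(F' x k).re)‖ ≤ 1 - δ₁ := by
      intro x hx
      have h1 := hcontr x (husub hx) k hkmem
      have h2 : |(F' x k).re| ≤ ‖F' x k‖ := habs_re (F' x k)
      rw [Real.norm_eq_abs, abs_neg, abs_mul, abs_of_pos hk2pos]
      nlinarith [abs_nonneg (F' x k).re, norm_nonneg (F' x k)]
    have key1 := mvt_aux husub' hconv hf1 hbd hmem_lf hmem_l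
    rw [Real.norm_eq_abs] at key1
    have hf1lf : lam k - k^2*(F lf k).re = lf := by linarith [hfixeq]
    have heq : (lam k - k^2*(F l k).re) - (lam k - k^2*(F lf k).re) = d.re + (l - lf) := by
      rw [hdre]; linear_combination -hf1lf
    rw [heq] at key1
    have habs2 : |l - lf| ≤ |d.re + (l - lf)| + |d.re| := by
      have := abs_add_le (d.re + (l - lf)) (-d.re)
      simpa using this
    linarith
  -- fact 2
  have hIm_diff : |(F l k).im - (F lf k).im| ≤ M' * |l - lf| := by
    have hf2 : ∀ x ∈ Icc a b, HasDerivWithinAt (fun t => (F t k).im)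
        ((F' x k).im) (Icc a b) x := by
      intro x hx
      have := (Complex.imCLM.hasFDerivAt (x := F x k)).comp_hasDerivWithinAt x
        (hH1 k hkmem x hx)
      exact this
    have hbd : ∀ x ∈ uIcc lf l, ‖(F' x k).im‖ ≤ M' := by
      intro x hx
      refine le_trans ?_ (hM' x (husub' hx) k hkmem)
      rw [Real.norm_eq_abs]
      exact habs_im (F' x k)
    simpa [Real.norm_eq_abs] using mvt_aux husub' hconv hf2 hbd hmem_lf hmem_l
  -- fact 3
  have hRem : ‖F l k - F lf k - F' lf k * ((l:ℂ) - (lf:ℂ))‖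
      ≤ (L * |l - lf| ^ α) * |l - lf| := by
    have hf3 : ∀ x ∈ Icc a b, HasDerivWithinAt (fun t => F t k - F' lf k * (t:ℂ))
        (F' x k - F' lf k) (Icc a b) x := by
      intro x hx
      have h := (hH1 k hkmem x hx).sub ((hofReal x).const_mul (F' lf k))
      rw [mul_one] at h
      exact h
    have hbd : ∀ x ∈ uIcc lf l, ‖F' x k - F' lf k‖ ≤ L * |l - lf| ^ α := by
      intro x hx
      refine le_trans (hL k hkmem x (husub hx) lf hlf) ?_
      exact mul_le_mul_of_nonneg_left
        (Real.rpow_le_rpow (abs_nonneg _) (abs_sub_left_of_mem_uIcc hx) hα.1.le) hL0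
    have key3 := mvt_aux husub' hconv hf3 hbd hmem_lf hmem_l
    have heq : (F l k - F' lf k * (l:ℂ)) - (F lf k - F' lf k * (lf:ℂ))
        = F l k - F lf k - F' lf k * ((l:ℂ) - (lf:ℂ)) := by ring
    rw [heq] at key3
    exact key3
  have hdpos : 0 < ‖d‖ := norm_pos_iff.mpr hd0
  -- comparison ‖dh‖ ≤ C₁ ‖d‖
  have hdh_le : ‖dh‖ ≤ C₁ * ‖d‖ := by
    have h1 := habs_sum dh
    rw [hdhre, hdhim, abs_neg, abs_of_pos (mul_pos hk2pos hIm_lf), abs_sub_comm] at h1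
    have h2 : (F lf k).im ≤ (F l k).im + M' * |l - lf| := by
      have := abs_le.mp hIm_diff
      linarith
    have h3 : |d.im| = k^2 * (F l k).im := by
      rw [hdim, abs_neg, abs_of_pos (mul_pos hk2pos hIm_l)]
    have h4 : |d.re| ≤ ‖d‖ := habs_re d
    have h5 : |d.im| ≤ ‖d‖ := habs_im d
    have h6 : |l - lf| * δ₁ ≤ ‖d‖ := by nlinarith
    have h7 : k^2 * (M' * |l - lf|) ≤ κ₁^2 * M' * |l - lf| := by
      nlinarith [abs_nonneg (l - lf), mul_nonneg hM'0 (abs_nonneg (l - lf))]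
    have h8 : k^2 * (F lf k).im ≤ k^2 * ((F l k).im + M' * |l - lf|) :=
      mul_le_mul_of_nonneg_left h2 hk2pos.le
    have h9 : (1 + κ₁^2*M') * |l - lf| ≤ (1 + κ₁^2*M') * (‖d‖ / δ₁) := by
      apply mul_le_mul_of_nonneg_left _ h1κM
      rw [le_div_iff₀ hδ₁]
      linarith
    rw [hC₁_def]
    have h10 : ((1 + κ₁^2*M')/δ₁ + 1) * ‖d‖ = (1 + κ₁^2*M') * (‖d‖/δ₁) + ‖d‖ := by
      field_simp
    rw [h10]
    nlinarith
  -- d1 vs dh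
  have hlamr : lam k = lf + k^2*(F lf k).re := by linarith [hfixeq]
  have hlamC : (lam k : ℂ) = (lf:ℂ) + ((k:ℂ))^2*((F lf k).re:ℂ) := by
    rw [hlamr]; push_cast; ring
  have hFC : F lf k = ((F lf k).re:ℂ) + ((F lf k).im:ℂ)*Complex.I :=
    (Complex.re_add_im (F lf k)).symm
  have hd1dh : d1 - dh = -((k:ℂ)^2 * F' lf k * ((l:ℂ) - (lf:ℂ))) := by
    rw [hd1_def, hdh_def]
    linear_combination hlamC - (k:ℂ)^2 * hFC
  have hnormk : ‖(k:ℂ)^2‖ = k^2 := by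
    rw [norm_pow, Complex.norm_real, Real.norm_eq_abs, sq_abs]
  have hnormllf : ‖(l:ℂ) - (lf:ℂ)‖ = |l - lf| := by
    rw [← Complex.ofReal_sub, Complex.norm_real, Real.norm_eq_abs]
  have hd1_ge : δ₁ * ‖dh‖ ≤ ‖d1‖ := by
    have h1 : ‖d1 - dh‖ ≤ (1 - δ₁) * ‖dh‖ := by
      rw [hd1dh, norm_neg, norm_mul, norm_mul, hnormk, hnormllf]
      have h2 := hcontr lf hlf k hkmem
      have h3 : k^2 * ‖F' lf k‖ * |l - lf| ≤ (1-δ₁) * |l - lf| :=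
        mul_le_mul_of_nonneg_right
          (le_trans (mul_le_mul_of_nonneg_right hk2le (norm_nonneg _)) h2) (abs_nonneg _)
      refine le_trans h3 (mul_le_mul_of_nonneg_left hε_le (by linarith))
    have h3 : ‖dh‖ - ‖d1‖ ≤ ‖dh - d1‖ := norm_sub_norm_le dh d1
    rw [← norm_neg (dh - d1)] at h3
    simp only [neg_sub] at h3
    linarith
  have hd1pos : 0 < ‖d1‖ := lt_of_lt_of_le (by positivity) hd1_ge
  have hd10 : d1 ≠ 0 := norm_pos_iff.mp hd1pos
  -- derivative values
  have hnhds : Icc a b ∈ 𝓝 l :=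
    Icc_mem_nhds (lt_of_lt_of_le ha hl.1) (lt_of_le_of_lt hl.2 hb)
  have hGdval : Gd l k = (1 + (k:ℂ)^2 * F' l k) / d^2 := by
    have hD : HasDerivWithinAt (fun x:ℝ => (lam k:ℂ) - (x:ℂ) - (k:ℂ)^2 * F x k)
        ((0:ℂ) - 1 - (k:ℂ)^2 * F' l k) (Icc a b) l :=
      ((hasDerivWithinAt_const l (Icc a b) ((lam k : ℂ))).sub (hofReal l)).sub
        ((hH1 k hkmem l hlab).const_mul _)
    have hGder : HasDerivWithinAt (fun x => G x k)
        (-((((lam k:ℂ) - (l:ℂ) - (k:ℂ)^2 * F l k))^2)⁻¹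
          * ((0:ℂ) - 1 - (k:ℂ)^2 * F' l k)) (Icc a b) l := by
      have h2 : (fun x : ℝ => G x k)
          = fun x : ℝ => ((lam k:ℂ) - (x:ℂ) - (k:ℂ)^2 * F x k)⁻¹ :=
        funext fun x => hG x k
      have h1 := (hasDerivAt_inv hd0e).comp_hasDerivWithinAt l hD
      rw [h2]
      exact h1
    have huniq := ((hGd k hk0 hk1 l hl).hasDerivAt hnhds).unique (hGder.hasDerivAt hnhds)
    rw [huniq, ← hd_def]; ring
  have hd10e : (lam k:ℂ) - (l:ℂ) - (k:ℂ)^2 * F (lamInf k) k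
      - (k:ℂ)^2 * F' (lamInf k) k * ((l:ℂ) - ((lamInf k : ℝ):ℂ)) ≠ 0 := by
    rw [← hlf_def, ← hd1_def]; exact hd10
  have hG1dval : G1d l k = (1 + (k:ℂ)^2 * F' lf k) / d1^2 := by
    have hD : HasDerivWithinAt
        (fun x:ℝ => (lam k:ℂ) - (x:ℂ) - (k:ℂ)^2 * F (lamInf k) k
          - (k:ℂ)^2 * F' (lamInf k) k * ((x:ℂ) - ((lamInf k : ℝ):ℂ)))
        ((0:ℂ) - 1 - 0 - (k:ℂ)^2 * F' (lamInf k) k * (1 - 0)) (Icc a b) l :=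
      (((hasDerivWithinAt_const l (Icc a b) ((lam k : ℂ))).sub (hofReal l)).sub
        (hasDerivWithinAt_const l (Icc a b) _)).sub
        (((hofReal l).sub (hasDerivWithinAt_const l (Icc a b)
          (((lamInf k : ℝ) : ℂ)))).const_mul _)
    have hGder : HasDerivWithinAt (fun x => G1 x k)
        (-((((lam k:ℂ) - (l:ℂ) - (k:ℂ)^2 * F (lamInf k) k
            - (k:ℂ)^2 * F' (lamInf k) k * ((l:ℂ) - ((lamInf k : ℝ):ℂ)))^2))⁻¹
          * ((0:ℂ) - 1 - 0 - (k:ℂ)^2 * F' (lamInf k) k * (1 - 0)))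
        (Icc a b) l := by
      have h2 : (fun x : ℝ => G1 x k)
          = fun x : ℝ => ((lam k:ℂ) - (x:ℂ) - (k:ℂ)^2 * F (lamInf k) k
              - (k:ℂ)^2 * F' (lamInf k) k * ((x:ℂ) - ((lamInf k : ℝ):ℂ)))⁻¹ :=
        funext fun x => hG1 x k
      have h1 := (hasDerivAt_inv hd10e).comp_hasDerivWithinAt l hD
      rw [h2]
      exact h1
    have huniq := ((hG1d k hk0 hk1 l hl).hasDerivAt hnhds).unique (hGder.hasDerivAt hnhds)
    rw [huniq, ← hlf_def, ← hd1_def]; ring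
  -- splitting identity
  have hkey : Gd l k - G1d l k
      = (k:ℂ)^2 * (F' l k - F' lf k) * (d⁻¹)^2
        + (1 + (k:ℂ)^2 * F' lf k) * (d1 - d) * ((d⁻¹)^2 * d1⁻¹ + d⁻¹ * (d1⁻¹)^2) := by
    rw [hGdval, hG1dval]
    exact key_aux _ _ _ _ _ hd0 hd10
  have hd1d : d1 - d = (k:ℂ)^2 * (F l k - F lf k - F' lf k * ((l:ℂ) - (lf:ℂ))) := by
    rw [hd1_def, hd_def]; ring
  -- norm bounds
  have hgh : ‖Ghat l k‖ = ‖dh‖⁻¹ := by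
    rw [hGhat l k, norm_inv, ← hlf_def, ← hdh_def]
  have hghn : (0:ℝ) ≤ ‖dh‖⁻¹ := by positivity
  have hdinv : ‖d‖⁻¹ ≤ C₁ * ‖dh‖⁻¹ := by
    have e1 : 1/‖d‖ ≤ C₁/‖dh‖ := (div_le_div_iff₀ hdpos hdh_pos).mpr (by linarith)
    rw [one_div, div_eq_mul_inv] at e1
    exact e1
  have hd1inv : ‖d1‖⁻¹ ≤ δ₁⁻¹ * ‖dh‖⁻¹ := by
    have e1 : 1/‖d1‖ ≤ 1/(δ₁*‖dh‖) :=
      (div_le_div_iff₀ hd1pos (by positivity)).mpr (by linarith)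
    rw [one_div, one_div, mul_inv] at e1
    exact e1
  have hεgh : |l - lf| * ‖dh‖⁻¹ ≤ 1 := by
    rw [← div_eq_mul_inv, div_le_one hdh_pos]; exact hε_le
  have hq_bd : ‖1 + (k:ℂ)^2 * F' lf k‖ ≤ 1 + κ₁^2 * M' := by
    refine le_trans (norm_add_le _ _) ?_
    rw [norm_one, norm_mul, hnormk]
    have h1 := hM' lf hlfab k hkmem
    have h2 : k^2*‖F' lf k‖ ≤ κ₁^2*M' :=
      le_trans (mul_le_mul_of_nonneg_right hk2le (norm_nonneg _))
        (mul_le_mul_of_nonneg_left h1 (sq_nonneg κ₁))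
    linarith
  have hpq : ‖F' l k - F' lf k‖ ≤ L * |l - lf| ^ α := hL k hkmem l hl lf hlf
  have hεα : (0:ℝ) ≤ |l - lf| ^ α := Real.rpow_nonneg (abs_nonneg _) α
  rw [hkey, hgh]
  have hT1 : ‖(k:ℂ)^2 * (F' l k - F' lf k) * (d⁻¹)^2‖
      ≤ k^2 * (L * |l - lf| ^ α) * (C₁ * ‖dh‖⁻¹)^2 := by
    simp only [norm_mul, norm_pow, norm_inv, Complex.norm_real, Real.norm_eq_abs, sq_abs]
    have h1 : ‖d‖⁻¹^2 ≤ (C₁ * ‖dh‖⁻¹)^2 := pow_le_pow_left₀ (by positivity) hdinv 2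
    have h2 : k^2 * ‖F' l k - F' lf k‖ ≤ k^2 * (L * |l - lf| ^ α) :=
      mul_le_mul_of_nonneg_left hpq hk2pos.le
    exact mul_le_mul h2 h1 (by positivity)
      (mul_nonneg hk2pos.le (mul_nonneg hL0 hεα))
  have hT2 : ‖(1 + (k:ℂ)^2 * F' lf k) * (d1 - d) * ((d⁻¹)^2 * d1⁻¹ + d⁻¹ * (d1⁻¹)^2)‖
      ≤ (1 + κ₁^2*M') * (k^2 * ((L * |l - lf| ^ α) * |l - lf|))
        * ((C₁*‖dh‖⁻¹)^2 * (δ₁⁻¹*‖dh‖⁻¹) + (C₁*‖dh‖⁻¹) * (δ₁⁻¹*‖dh‖⁻¹)^2) := by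
    rw [norm_mul, norm_mul]
    have hA : ‖d1 - d‖ ≤ k^2 * ((L * |l - lf| ^ α) * |l - lf|) := by
      rw [hd1d, norm_mul, hnormk]
      exact mul_le_mul_of_nonneg_left hRem hk2pos.le
    have hB : ‖(d⁻¹)^2 * d1⁻¹ + d⁻¹ * (d1⁻¹)^2‖
        ≤ (C₁*‖dh‖⁻¹)^2 * (δ₁⁻¹*‖dh‖⁻¹) + (C₁*‖dh‖⁻¹) * (δ₁⁻¹*‖dh‖⁻¹)^2 := by
      refine le_trans (norm_add_le _ _) ?_
      simp only [norm_mul, norm_pow, norm_inv]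
      have b1 : ‖d‖⁻¹^2 ≤ (C₁*‖dh‖⁻¹)^2 := pow_le_pow_left₀ (by positivity) hdinv 2
      have b2 : ‖d1‖⁻¹^2 ≤ (δ₁⁻¹*‖dh‖⁻¹)^2 := pow_le_pow_left₀ (by positivity) hd1inv 2
      have c1 := mul_le_mul b1 hd1inv (by positivity) (by positivity)
      have c2 := mul_le_mul hdinv b2 (by positivity) (mul_nonneg hC₁.le hghn)
      exact add_le_add c1 c2
    have hAnn : (0:ℝ) ≤ k^2 * ((L * |l - lf| ^ α) * |l - lf|) :=
      mul_nonneg hk2pos.le (mul_nonneg (mul_nonneg hL0 hεα) (abs_nonneg _))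
    have c3 : ‖(1 + (k:ℂ)^2 * F' lf k)‖ * ‖d1 - d‖
        ≤ (1 + κ₁^2*M') * (k^2 * ((L * |l - lf| ^ α) * |l - lf|)) :=
      mul_le_mul hq_bd hA (norm_nonneg _) h1κM
    exact mul_le_mul c3 hB (norm_nonneg _) (mul_nonneg h1κM hAnn)
  refine le_trans (norm_add_le _ _) (le_trans (add_le_add hT1 hT2) ?_)
  have hrw1 : k^2 * (L * |l - lf| ^ α) * (C₁ * ‖dh‖⁻¹)^2
      = C₁^2*L * (k^2 * ‖dh‖⁻¹^2 * |l - lf| ^ α) := by ring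
  have hrw2 : (1 + κ₁^2*M') * (k^2 * ((L * |l - lf| ^ α) * |l - lf|))
        * ((C₁*‖dh‖⁻¹)^2 * (δ₁⁻¹*‖dh‖⁻¹) + (C₁*‖dh‖⁻¹) * (δ₁⁻¹*‖dh‖⁻¹)^2)
      = ((1+κ₁^2*M')*L*(C₁^2/δ₁ + C₁/δ₁^2)) * (k^2 * ‖dh‖⁻¹^2 * |l - lf| ^ α)
        * (|l - lf| * ‖dh‖⁻¹) := by
    ring
  rw [hrw1, hrw2]
  have hbase : (0:ℝ) ≤ k^2 * ‖dh‖⁻¹^2 * |l - lf| ^ α := by positivity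
  have hfin : ((1+κ₁^2*M')*L*(C₁^2/δ₁ + C₁/δ₁^2)) * (k^2 * ‖dh‖⁻¹^2 * |l - lf| ^ α)
        * (|l - lf| * ‖dh‖⁻¹)
      ≤ ((1+κ₁^2*M')*L*(C₁^2/δ₁ + C₁/δ₁^2)) * (k^2 * ‖dh‖⁻¹^2 * |l - lf| ^ α) :=
    mul_le_of_le_one_right (mul_nonneg hWnn hbase) hεgh
  linarith [hbase, hfin]
end

section
/- (Feshbach–Livsic formula) Let H be a self-adjoint operator on a Hilbert space ℋ and P an orthogonal projection with finite-dimensional range contained in Dom(H); set P^⊥ = I − P and H^⊥ := P^⊥HP^⊥. Then for every z ∈ ℂ with Im z ≠ 0, the operator M := P(H−z)P − PHP^⊥(H^⊥ − z)⁻¹P^⊥HP is invertible as an operator from Ran P to Ran P, and P(H−z)⁻¹P = P·M⁻¹·P. -/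
open MeasureTheory

private lemma schur_aux {R : Type*} [Ring R] (P A S Rz : R)
    (hP2 : P*P = P)
    (hQS : (1-P)*S = S) (hSQ : S*(1-P) = S)
    (hQAQS : (1-P)*A*(1-P)*S = 1-P) (hSQAQ : S*((1-P)*A*(1-P)) = 1-P)
    (hAR : A*Rz = 1) (hRA : Rz*A = 1) :
    (P*A*P - P*A*S*A*P) * (P*Rz*P) = P ∧
    (P*Rz*P) * (P*A*P - P*A*S*A*P) = P := by
  have hPQ : P*(1-P) = 0 := by rw [mul_sub, mul_one, hP2, sub_self]
  have hQP : (1-P)*P = 0 := by rw [sub_mul, one_mul, hP2, sub_self]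
  constructor
  · -- first identity
    have e0 : (1-P)*(A*(Rz*P)) = 0 := by
      rw [← mul_assoc A, hAR, one_mul, hQP]
    have t : (1-P)*A*(P*(Rz*P)) + (1-P)*A*((1-P)*(Rz*P)) = (1-P)*(A*(Rz*P)) := by
      noncomm_ring
    have e1 : (1-P)*A*((1-P)*(Rz*P)) = -((1-P)*A*(P*(Rz*P))) :=
      eq_neg_of_add_eq_zero_left (by rw [add_comm] at t; exact t.trans e0)
    have e2 : (1-P)*(Rz*P) = -(S*(A*(P*(Rz*P)))) := by
      calc (1-P)*(Rz*P) = S*((1-P)*A*(1-P))*(Rz*P) := by rw [hSQAQ]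
        _ = S*((1-P)*A*((1-P)*(Rz*P))) := by noncomm_ring
        _ = S*(-((1-P)*A*(P*(Rz*P)))) := by rw [e1]
        _ = -((S*(1-P))*(A*(P*(Rz*P)))) := by noncomm_ring
        _ = -(S*(A*(P*(Rz*P)))) := by rw [hSQ]
    calc (P*A*P - P*A*S*A*P) * (P*Rz*P)
        = P*A*((P*P)*(Rz*P)) - P*A*(S*(A*((P*P)*(Rz*P)))) := by noncomm_ring
      _ = P*A*(P*(Rz*P)) - P*A*(S*(A*(P*(Rz*P)))) := by rw [hP2]
      _ = P*A*(P*(Rz*P)) + P*A*((1-P)*(Rz*P)) := by rw [e2]; noncomm_ring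
      _ = P*(A*(Rz*P)) := by noncomm_ring
      _ = P*P := by rw [← mul_assoc A, hAR, one_mul]
      _ = P := hP2
  · -- second identity
    have hPA : P*Rz*A = P := by rw [mul_assoc, hRA, mul_one]
    have e0 : P*Rz*(A*(1-P)) = 0 := by
      rw [← mul_assoc, hPA, hPQ]
    have t : P*Rz*(P*(A*(1-P))) + P*Rz*((1-P)*(A*(1-P))) = P*Rz*(A*(1-P)) := by
      noncomm_ring
    have e1 : P*Rz*((1-P)*(A*(1-P))) = -(P*Rz*(P*(A*(1-P)))) :=
      eq_neg_of_add_eq_zero_left (by rw [add_comm] at t; exact t.trans e0)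
    have e2 : P*(Rz*(1-P)) = -(P*(Rz*(P*(A*S)))) := by
      calc P*(Rz*(1-P)) = P*(Rz*((1-P)*A*(1-P)*S)) := by rw [hQAQS]
        _ = (P*Rz*((1-P)*(A*(1-P))))*S := by noncomm_ring
        _ = (-(P*Rz*(P*(A*(1-P)))))*S := by rw [e1]
        _ = -(P*(Rz*(P*(A*((1-P)*S))))) := by noncomm_ring
        _ = -(P*(Rz*(P*(A*S)))) := by rw [hQS]
    have e2' : P*(Rz*(P*(A*S))) = -(P*(Rz*(1-P))) := by rw [e2, neg_neg]
    calc (P*Rz*P) * (P*A*P - P*A*S*A*P)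
        = (P*Rz*(P*P))*(A*P) - (P*Rz*(P*P))*(A*(S*(A*P))) := by noncomm_ring
      _ = (P*Rz*P)*(A*P) - (P*Rz*P)*(A*(S*(A*P))) := by rw [hP2]
      _ = (P*Rz*P)*(A*P) - (P*(Rz*(P*(A*S))))*(A*P) := by noncomm_ring
      _ = (P*Rz*P)*(A*P) - (-(P*(Rz*(1-P))))*(A*P) := by rw [e2']
      _ = P*((Rz*A)*P) := by noncomm_ring
      _ = P*P := by rw [hRA, one_mul]
      _ = P := hP2

/-- Lemma 3.6 (Feshbach–Livsic formula). P is an orthogonal projection with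
finite-dimensional range, H is self-adjoint, Im z ≠ 0, and S is the resolvent
at z of H^⊥ = P^⊥HP^⊥ (restricted to Ran P^⊥), extended by 0 to all of E
(characterized by the four hypotheses hS1–hS4). Then
M := P(H−z)P − PHP^⊥(H^⊥−z)⁻¹P^⊥HP is invertible as a map Ran P → Ran P
(its inverse, extended by zero, is W), and P(H−z)⁻¹P = P M⁻¹ P. -/
theorem stmt_11
    {E : Type*} [NormedAddCommGroup E] [InnerProductSpace ℂ E] [CompleteSpace E]
    (H P : E →L[ℂ] E) (hH : IsSelfAdjoint H)
    (hP : IsSelfAdjoint P) (hP2 : P * P = P)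
    (hfin : FiniteDimensional ℂ (LinearMap.range (P : E →ₗ[ℂ] E)))
    (z : ℂ) (hz : z.im ≠ 0)
    (S : E →L[ℂ] E)
    (hS1 : S * (1 - P) = S) (hS2 : (1 - P) * S = S)
    (hS3 : ((1 - P) * H * (1 - P) - z • 1) * S = 1 - P)
    (hS4 : S * ((1 - P) * H * (1 - P) - z • 1) * (1 - P) = 1 - P) :
    ∃ W : E →L[ℂ] E, W = P * W * P ∧
      (P * (H - z • 1) * P - P * H * S * H * P) * W = P ∧
      W * (P * (H - z • 1) * P - P * H * S * H * P) = P ∧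
      P * Ring.inverse (H - z • 1) * P = W := by
  -- the resolvent of H at z exists
  have hA : IsUnit (H - z • 1) := by
    have hz' : z ∉ spectrum ℂ H := by
      intro hmem
      have h := hH.mem_spectrum_eq_re hmem
      apply hz; rw [h]; simp
    rw [spectrum.notMem_iff] at hz'
    have h2 : H - z • 1 = -((algebraMap ℂ (E →L[ℂ] E)) z - H) := by
      simp [Algebra.algebraMap_eq_smul_one]
    rw [h2]; exact hz'.neg
  set Rz := Ring.inverse (H - z • 1) with hRz
  have hAR : (H - z • 1) * Rz = 1 := Ring.mul_inverse_cancel _ hA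
  have hRA : Rz * (H - z • 1) = 1 := Ring.inverse_mul_cancel _ hA
  -- auxiliary vanishing facts
  have hPQ : P*(1-P) = 0 := by rw [mul_sub, mul_one, hP2, sub_self]
  have hQP : (1-P)*P = 0 := by rw [sub_mul, one_mul, hP2, sub_self]
  have hPS : P*S = 0 := by rw [← hS2, ← mul_assoc, hPQ, zero_mul]
  have hSP : S*P = 0 := by rw [← hS1, mul_assoc, hQP, mul_zero]
  have hQ2 : (1-P)*(1-P) = (1-P) := by rw [mul_sub, mul_one, hQP, sub_zero]
  -- generic smul-subtraction distribution helpers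
  have mul_sub_smul : ∀ (W X Y : E →L[ℂ] E) (c : ℂ), W*(X - c•Y) = W*X - c•(W*Y) := by
    intro W X Y c; rw [mul_sub, mul_smul_comm]
  have sub_smul_mul : ∀ (X Y W : E →L[ℂ] E) (c : ℂ), (X - c•Y)*W = X*W - c•(Y*W) := by
    intro X Y W c; rw [sub_mul, smul_mul_assoc]
  have expand : ∀ (Q' X W : E →L[ℂ] E) (c : ℂ), Q'*(X - c•1)*W = Q'*X*W - c•(Q'*W) := by
    intro Q' X W c
    rw [mul_sub_smul Q' X 1 c, mul_one, sub_smul_mul (Q'*X) Q' W c]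
  have hQAQ : (1-P)*(H - z • 1)*(1-P) = (1-P)*H*(1-P) - z•(1-P) := by
    rw [expand, hQ2]
  have hQHQ1 : (1-P)*H*(1-P)*(1-P) = (1-P)*H*(1-P) := by
    rw [mul_assoc ((1-P)*H), hQ2]
  -- translate hS3, hS4 to statements about A = H - z•1
  have hS3' : ((1-P)*H*(1-P))*S - z•S = 1-P := by
    calc ((1-P)*H*(1-P))*S - z•S = ((1-P)*H*(1-P) - z•1)*S := by
          rw [sub_smul_mul, one_mul]
      _ = 1-P := hS3
  have hQAQS : (1-P)*(H - z • 1)*(1-P)*S = 1-P := by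
    rw [hQAQ, sub_smul_mul, hS2]; exact hS3'
  have hS4' : S*((1-P)*H*(1-P)) - z•S = 1-P := by
    calc S*((1-P)*H*(1-P)) - z•S
        = S*((1-P)*H*(1-P) - z•1)*(1-P) := by
          rw [mul_sub_smul, mul_one, sub_smul_mul, hS1, mul_assoc S, hQHQ1]
      _ = 1-P := hS4
  have hSQAQ : S*((1-P)*(H - z • 1)*(1-P)) = 1-P := by
    rw [hQAQ, mul_sub_smul, hS1]; exact hS4'
  -- replace H by A in the middle factor of M
  have h1 : P*(H - z • 1)*S = P*H*S := by
    rw [mul_sub_smul, mul_one, sub_smul_mul, hPS, smul_zero, sub_zero]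
  have h2 : S*((H - z • 1)*P) = S*(H*P) := by
    rw [sub_smul_mul, one_mul, mul_sub_smul, hSP, smul_zero, sub_zero]
  have hM : P * H * S * H * P = P*(H - z • 1)*S*(H - z • 1)*P := by
    rw [h1, mul_assoc (P*H*S), mul_assoc (P*H*S), mul_assoc (P*H), mul_assoc (P*H), h2]
  have hP2r : ∀ x : E →L[ℂ] E, P*(P*x) = P*x := fun x => by rw [← mul_assoc, hP2]
  obtain ⟨g1, g2⟩ := schur_aux P (H - z • 1) S Rz hP2 hS2 hS1 hQAQS hSQAQ hAR hRA
  refine ⟨P*Rz*P, ?_, ?_, ?_, rfl⟩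
  · simp only [mul_assoc, hP2]
    rw [hP2r]
  · rw [hM]; exact g1
  · rw [hM]; exact g2
end

section
/- For every κ ∈ ℝ and every z ∈ ℂ with Im z ≠ 0: ⟨φ, (H_κ − z)⁻¹ φ⟩ = 1 / (λ₀ + κ|⟨φ,ψ⟩|² − z − κ²|⟨φ,ψ⟩|²·𝓕_κ(z)). -/
open MeasureTheory

/-- The Feshbach–Livsic reduction of the resolvent of the rank-one perturbation
H_κ = H₀ + κ|ψ⟩⟨ψ| to the one-dimensional range of P = |φ⟩⟨φ|:
⟨φ, (H_κ − z)⁻¹φ⟩ = 1/(λ₀ + κ|⟨φ,ψ⟩|² − z − κ²|⟨φ,ψ⟩|²𝓕_κ(z)), where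
𝓕_κ(z) = ⟨ψ, P^⊥(H_κ^⊥ − z)⁻¹P^⊥ψ⟩ = ⟨ψ, Sψ⟩ with S the reduced resolvent
characterized by hS1–hS4. -/
theorem stmt_17
    {E : Type*} [NormedAddCommGroup E] [InnerProductSpace ℂ E] [CompleteSpace E]
    (H₀ : E →L[ℂ] E) (hH₀ : IsSelfAdjoint H₀)
    (l₀ : ℝ) (φ ψ : E) (hφ : ‖φ‖ = 1) (hψ : ‖ψ‖ = 1)
    (heig : H₀ φ = (l₀ : ℂ) • φ)
    (hsimple : ∀ x : E, H₀ x = (l₀ : ℂ) • x → ∃ c : ℂ, x = c • φ)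
    (hov : (inner ℂ φ ψ : ℂ) ≠ 0)
    (Hk : ℝ → E →L[ℂ] E)
    (hHk : ∀ κ : ℝ, ∀ x : E, Hk κ x = H₀ x + ((κ : ℂ) * (inner ℂ ψ x : ℂ)) • ψ)
    (P : E →L[ℂ] E) (hPdef : ∀ x : E, P x = (inner ℂ φ x : ℂ) • φ)
    (κ : ℝ) (z : ℂ) (hz : z.im ≠ 0)
    (S : E →L[ℂ] E)
    (hS1 : S * (1 - P) = S) (hS2 : (1 - P) * S = S)
    (hS3 : ((1 - P) * Hk κ * (1 - P) - z • 1) * S = 1 - P)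
    (hS4 : S * ((1 - P) * Hk κ * (1 - P) - z • 1) * (1 - P) = 1 - P) :
    (inner ℂ φ (Ring.inverse (Hk κ - z • 1) φ) : ℂ)
      = ((l₀ : ℂ) + (κ : ℂ) * ((‖(inner ℂ φ ψ : ℂ)‖ : ℝ) : ℂ) ^ 2 - z
          - (κ : ℂ) ^ 2 * ((‖(inner ℂ φ ψ : ℂ)‖ : ℝ) : ℂ) ^ 2 * (inner ℂ ψ (S ψ) : ℂ))⁻¹ := by
  set Q : E →L[ℂ] E := 1 - P with hQ
  set A : E →L[ℂ] E := Hk κ - z • 1 with hA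
  have hφφ : (inner ℂ φ φ : ℂ) = 1 := by
    rw [inner_self_eq_norm_sq_to_K, hφ]; norm_num
  have hφne : φ ≠ 0 := by
    intro h; rw [h, norm_zero] at hφ; norm_num at hφ
  have hPφ : P φ = φ := by rw [hPdef, hφφ, one_smul]
  have hP2 : P * P = P := by
    ext x
    simp [ContinuousLinearMap.mul_apply, hPdef, inner_smul_right, hφφ, smul_smul, hφ]
  have hPQ : P * Q = 0 := by rw [hQ, mul_sub, mul_one, hP2, sub_self]
  have hQP : Q * P = 0 := by rw [hQ, sub_mul, one_mul, hP2, sub_self]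
  have hPQ1 : P + Q = 1 := by rw [hQ]; abel
  have hPS : P * S = 0 := by rw [← hS2, ← mul_assoc, hPQ, zero_mul]
  have hSP : S * P = 0 := by rw [← hS1, mul_assoc, hQP, mul_zero]
  have hSφ : S φ = 0 := by
    have h : (S * P) φ = (0 : E →L[ℂ] E) φ := by rw [hSP]
    simpa [ContinuousLinearMap.mul_apply, hPφ] using h
  have hφS : ∀ y : E, (inner ℂ φ (S y) : ℂ) = 0 := by
    intro y
    have h : (P * S) y = (0 : E →L[ℂ] E) y := by rw [hPS]
    simp only [ContinuousLinearMap.mul_apply, ContinuousLinearMap.zero_apply, hPdef] at h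
    rcases smul_eq_zero.mp h with h | h
    · exact h
    · exact absurd h hφne
  -- symmetry of H₀
  have hsym := ContinuousLinearMap.isSelfAdjoint_iff_isSymmetric.mp hH₀
  have hφH : ∀ y : E, (inner ℂ φ (H₀ y) : ℂ) = (l₀ : ℂ) * inner ℂ φ y := by
    intro y
    have h : (inner ℂ (H₀ φ) y : ℂ) = inner ℂ φ (H₀ y) := hsym φ y
    rw [← h, heig, inner_smul_left, Complex.conj_ofReal]
  have hφA : ∀ y : E, (inner ℂ φ (A y) : ℂ)
      = (l₀ : ℂ) * inner ℂ φ y + (κ : ℂ) * inner ℂ ψ y * inner ℂ φ ψ - z * inner ℂ φ y := by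
    intro y
    rw [hA]
    simp only [ContinuousLinearMap.sub_apply, ContinuousLinearMap.smul_apply,
      ContinuousLinearMap.one_apply, hHk, inner_sub_right, inner_add_right,
      inner_smul_right, hφH]
  set w : ℂ := (inner ℂ φ ψ : ℂ) with hw
  have hw2 : (inner ℂ ψ φ : ℂ) * w = ((‖w‖ : ℝ) : ℂ) ^ 2 := by
    rw [← inner_conj_symm ψ φ, ← hw, mul_comm, Complex.mul_conj]
    norm_cast
    rw [Complex.normSq_eq_norm_sq]
  -- smul lemmas
  have hzT : ∀ T : E →L[ℂ] E, (z • (1 : E →L[ℂ] E)) * T = z • T := by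
    intro T; rw [smul_mul_assoc, one_mul]
  have hTz : ∀ T : E →L[ℂ] E, T * (z • (1 : E →L[ℂ] E)) = z • T := by
    intro T; rw [mul_smul_comm, mul_one]
  -- f4 : Q*A*S = Q
  have f4 : Q * A * S = Q := by
    have e1 : Q * A = Q * Hk κ - z • Q := by rw [hA, mul_sub, hTz]
    have e2 : Q * A * S = Q * Hk κ * S - z • S := by
      rw [e1, sub_mul, smul_mul_assoc, hS2]
    have e3 : Q * Hk κ * S - z • S = Q := by
      have h := hS3
      rw [sub_mul, hzT, mul_assoc (Q * Hk κ) Q S, hS2] at h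
      exact h
    rw [e2, e3]
  set a : ℂ := (l₀ : ℂ) + (κ : ℂ) * ((‖w‖ : ℝ) : ℂ) ^ 2 - z with ha
  set b : ℂ := (κ : ℂ) ^ 2 * ((‖w‖ : ℝ) : ℂ) ^ 2 * (inner ℂ ψ (S ψ) : ℂ) with hb
  have hAφφ : (inner ℂ φ (A φ) : ℂ) = a := by
    rw [hφA φ, hφφ, ha]
    have : (κ : ℂ) * (inner ℂ ψ φ : ℂ) * w = (κ : ℂ) * ((‖w‖ : ℝ) : ℂ) ^ 2 := by
      rw [mul_assoc, hw2]
    linear_combination this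
  have hAφ : A φ = ((l₀ : ℂ) - z) • φ + ((κ : ℂ) * (inner ℂ ψ φ : ℂ)) • ψ := by
    rw [hA]
    simp only [ContinuousLinearMap.sub_apply, ContinuousLinearMap.smul_apply,
      ContinuousLinearMap.one_apply, hHk, heig]
    module
  have hSAφ : S (A φ) = ((κ : ℂ) * (inner ℂ ψ φ : ℂ)) • S ψ := by
    rw [hAφ, map_add, _root_.map_smul, _root_.map_smul, hSφ, smul_zero, zero_add]
  have hkey : (inner ℂ φ (A (S (A φ))) : ℂ) = b := by
    rw [hSAφ, _root_.map_smul, inner_smul_right, hφA (S ψ), hφS, hb]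
    linear_combination ((κ:ℂ)^2 * (inner ℂ ψ (S ψ) : ℂ)) * hw2
  -- f5 : P*A*P = a • P
  have f5 : P * A * P = a • P := by
    ext x
    simp only [ContinuousLinearMap.mul_apply, ContinuousLinearMap.smul_apply, hPdef,
      _root_.map_smul, inner_smul_right, hAφφ, smul_smul]
    rw [mul_comm]
  -- f6 : P*A*S*A*P = b • P
  have f6 : P * A * (S * (A * P)) = b • P := by
    ext x
    simp only [ContinuousLinearMap.mul_apply, ContinuousLinearMap.smul_apply, hPdef,
      _root_.map_smul, inner_smul_right, hkey, smul_smul]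
    rw [mul_comm]
  set D : ℂ := a - b with hD
  -- f7 : Q*A*(1-S*A)*P = 0
  have f7 : Q * A * ((1 - S * A) * P) = 0 := by
    have e : Q * A * ((1 - S * A) * P) = Q * A * P - (Q * A * S) * (A * P) := by
      noncomm_ring
    rw [e, f4, ← mul_assoc, sub_self]
  -- f8 : A * ((1 - S*A)*P) = D • P
  have f8 : A * ((1 - S * A) * P) = D • P := by
    have e : A * ((1 - S * A) * P)
        = P * (A * ((1 - S * A) * P)) + Q * (A * ((1 - S * A) * P)) := by
      rw [← add_mul, hPQ1, one_mul]
    have eP : P * (A * ((1 - S * A) * P)) = P * A * P - P * A * (S * (A * P)) := by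
      noncomm_ring
    have eQ : Q * (A * ((1 - S * A) * P)) = Q * A * ((1 - S * A) * P) := by
      rw [← mul_assoc]
    rw [e, eP, eQ, f5, f6, f7, add_zero, ← sub_smul, ← hD]
  -- self-adjointness of Hk κ, invertibility of A
  have hsa : IsSelfAdjoint (Hk κ) := by
    rw [ContinuousLinearMap.isSelfAdjoint_iff_isSymmetric]
    intro x y
    simp only [ContinuousLinearMap.coe_coe, hHk, inner_add_left, inner_add_right,
      inner_smul_left, inner_smul_right, map_mul, Complex.conj_ofReal, inner_conj_symm]
    have hxy : (inner ℂ (H₀ x) y : ℂ) = inner ℂ x (H₀ y) := hsym x y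
    linear_combination hxy
  have hzspec : z ∉ spectrum ℂ (Hk κ) := fun h => hz (hsa.im_eq_zero_of_mem_spectrum h)
  have hunit : IsUnit A := by
    have h := (spectrum.notMem_iff.mp hzspec).neg
    rwa [neg_sub, Algebra.algebraMap_eq_smul_one, ← hA] at h
  -- D ≠ 0
  have hDne : D ≠ 0 := by
    intro h0
    have hu : A * ((1 - S * A) * P) = 0 := by rw [f8, h0, zero_smul]
    obtain ⟨u, hu'⟩ := hunit
    have hz0 : (1 - S * A) * P = 0 := by
      calc (1 - S * A) * P = ((↑u⁻¹ : E →L[ℂ] E) * A) * ((1 - S * A) * P) := by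
            rw [← hu', u.inv_mul, one_mul]
        _ = (↑u⁻¹ : E →L[ℂ] E) * (A * ((1 - S * A) * P)) := by rw [mul_assoc]
        _ = 0 := by rw [hu, mul_zero]
    have hP' : P * ((1 - S * A) * P) = P := by
      have e : P * ((1 - S * A) * P) = P * P - (P * S) * (A * P) := by noncomm_ring
      rw [e, hP2, hPS, zero_mul, sub_zero]
    rw [hz0, mul_zero] at hP'
    have : P φ = 0 := by rw [← hP']; rfl
    rw [hPφ] at this
    exact hφne this
  -- the explicit inverse
  set R : E →L[ℂ] E := D⁻¹ • ((1 - S * A) * P * (1 - A * S)) + S with hR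
  have hAR : A * R = 1 := by
    have h1 : A * R = D⁻¹ • ((A * ((1 - S * A) * P)) * (1 - A * S)) + A * S := by
      rw [hR, mul_add, mul_smul_comm, ← mul_assoc]
    rw [h1, f8, smul_mul_assoc, smul_smul, inv_mul_cancel₀ hDne, one_smul]
    have h2 : A * S = P * (A * S) + Q * (A * S) := by rw [← add_mul, hPQ1, one_mul]
    have h3 : Q * (A * S) = Q := by rw [← mul_assoc, f4]
    rw [h3] at h2
    rw [mul_sub, mul_one]
    nth_rewrite 2 [h2]
    rw [show P - P * (A * S) + (P * (A * S) + Q) = P + Q by abel, hPQ1]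
  have hinv : Ring.inverse A = R := by
    have h := Ring.inverse_mul_cancel A hunit
    calc Ring.inverse A = Ring.inverse A * (A * R) := by rw [hAR, mul_one]
      _ = (Ring.inverse A * A) * R := by rw [mul_assoc]
      _ = R := by rw [h, one_mul]
  rw [hinv, hR]
  have hfinal : ((1 - S * A) * P * (1 - A * S)) φ = φ - S (A φ) := by
    simp [ContinuousLinearMap.mul_apply, ContinuousLinearMap.sub_apply,
      ContinuousLinearMap.one_apply, hSφ, hPφ]
  simp only [ContinuousLinearMap.add_apply, ContinuousLinearMap.smul_apply, hfinal,
    inner_add_right, inner_smul_right, inner_sub_right, hφφ, hφS, sub_zero, add_zero,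
    mul_one]
end
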